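/- arXiv:1310.5365 — 11 statements merged into one kernel-verified Lean document; each statement's English description precedes it below -/
import Mathlib

section
/- Let k be a field and B, C nonzero finite-dimensional k-vector spaces. Suppose A is a k-subspace of B ⊗_k C such that (1) for every nonzero b ∈ B there exists a nonzero c ∈ C with b ⊗ c ∈ A, and (2) for every nonzero c ∈ C there exists a nonzero b ∈ B with b ⊗ c ∈ A. Then dim_k(A) ≥ dim_k(B) + dim_k(C) − 1. -/
open TensorProduct Module

universe uk v

section Master

variable {k : Type uk} [Field k]

section Helpers

variable {B C : Type v} [AddCommGroup B] [Module k B] [AddCommGroup C] [Module k C]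

theorem aux_exists_dual_one {b : B} (hb : b ≠ 0) : ∃ f : B →ₗ[k] k, f b = 1 := by
  have h : ¬ (∀ φ : Module.Dual k B, φ b = 0) := by
    rw [Module.forall_dual_apply_eq_zero_iff]
    exact hb
  push_neg at h
  obtain ⟨φ, hφ⟩ := h
  exact ⟨(φ b)⁻¹ • φ, by simp [inv_mul_cancel₀ hφ]⟩

/-- The contraction map `B ⊗ C → B` induced by a functional on `C`. -/
noncomputable def auxContract (g : C →ₗ[k] k) : (B ⊗[k] C) →ₗ[k] B :=
  (TensorProduct.rid k B).toLinearMap ∘ₗ LinearMap.lTensor B g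

@[simp] theorem auxContract_tmul (g : C →ₗ[k] k) (b : B) (c : C) :
    auxContract (k := k) g (b ⊗ₜ[k] c) = g c • b := by
  simp [auxContract]

theorem aux_tmul_ne_zero {b : B} {c : C} (hb : b ≠ 0) (hc : c ≠ 0) :
    b ⊗ₜ[k] c ≠ (0 : B ⊗[k] C) := by
  obtain ⟨g, hg⟩ := aux_exists_dual_one (k := k) hc
  intro h
  have := congrArg (auxContract (k := k) g) h
  rw [auxContract_tmul, hg, one_smul, map_zero] at this
  exact hb this

theorem aux_tmul_right_inj {c₀ : C} (hc₀ : c₀ ≠ 0) {b b' : B}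
    (h : b ⊗ₜ[k] c₀ = b' ⊗ₜ[k] c₀) : b = b' := by
  obtain ⟨g, hg⟩ := aux_exists_dual_one (k := k) hc₀
  have := congrArg (auxContract (k := k) g) h
  rwa [auxContract_tmul, auxContract_tmul, hg, one_smul, one_smul] at this

theorem aux_mem_of_tmul_smul {A : Submodule k (B ⊗[k] C)} {b : B} {c : C} {t : k}
    (ht : t ≠ 0) (h : b ⊗ₜ[k] (t • c) ∈ A) : b ⊗ₜ[k] c ∈ A := by
  have := A.smul_mem t⁻¹ h
  rwa [TensorProduct.tmul_smul, smul_smul, inv_mul_cancel₀ ht, one_smul] at this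

theorem aux_mem_of_span {A : Submodule k (B ⊗[k] C)} {b : B} {c c₁ : C}
    (hc : c ∈ Submodule.span k {c₁}) (hc0 : c ≠ 0) (h : b ⊗ₜ[k] c ∈ A) :
    b ⊗ₜ[k] c₁ ∈ A := by
  obtain ⟨t, rfl⟩ := Submodule.mem_span_singleton.mp hc
  have ht : t ≠ 0 := by rintro rfl; simp at hc0
  exact aux_mem_of_tmul_smul ht h

theorem mem_Bset {A : Submodule k (B ⊗[k] C)} {b : B} {c : C} :
    b ∈ A.comap ((TensorProduct.mk k B C).flip c) ↔ b ⊗ₜ[k] c ∈ A := Iff.rfl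

/-- Rank–nullity for the restriction of a linear map to a submodule. -/
theorem aux_finrank_map_add_inf {M D : Type v} [AddCommGroup M] [Module k M]
    [FiniteDimensional k M] [AddCommGroup D] [Module k D]
    (f : M →ₗ[k] D) (A : Submodule k M) :
    finrank k (A.map f) + finrank k (A ⊓ LinearMap.ker f : Submodule k M) = finrank k A := by
  have h := LinearMap.finrank_range_add_finrank_ker (f.comp A.subtype)
  rw [LinearMap.range_comp, Submodule.range_subtype, LinearMap.ker_comp] at h
  have heq : Submodule.comap A.subtype (LinearMap.ker f)
      = Submodule.comap A.subtype (A ⊓ LinearMap.ker f) := by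
    rw [Submodule.comap_inf, Submodule.comap_subtype_self, top_inf_eq]
  rw [heq] at h
  rwa [(Submodule.comapSubtypeEquivOfLe
    (inf_le_left : A ⊓ LinearMap.ker f ≤ A)).finrank_eq] at h

variable [FiniteDimensional k B] [FiniteDimensional k C]

/-- Key dimension identity: quotienting the right factor by a line. -/
theorem aux_line_quot_dim (A : Submodule k (B ⊗[k] C)) {c₀ : C} (hc₀ : c₀ ≠ 0) :
    finrank k (A.map (LinearMap.lTensor B (Submodule.span k {c₀}).mkQ))
      + finrank k (A.comap ((TensorProduct.mk k B C).flip c₀)) = finrank k A := by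
  set f := LinearMap.lTensor B (Submodule.span k {c₀}).mkQ with hf
  rw [← aux_finrank_map_add_inf f A]
  congr 1
  -- build an equivalence between `A ⊓ ker f` and the comap
  set Bc := A.comap ((TensorProduct.mk k B C).flip c₀) with hBc
  have hmemK : ∀ b : B, b ⊗ₜ[k] c₀ ∈ LinearMap.ker f := by
    intro b
    have h0 : (Submodule.span k {c₀}).mkQ c₀ = 0 := by
      rw [Submodule.mkQ_apply, Submodule.Quotient.mk_eq_zero]
      exact Submodule.mem_span_singleton_self c₀
    simp [hf, LinearMap.mem_ker, h0]
  have hmem : ∀ x : Bc, ((TensorProduct.mk k B C).flip c₀ ∘ₗ Bc.subtype) x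
      ∈ A ⊓ LinearMap.ker f := by
    rintro ⟨b, hb⟩
    exact ⟨hb, hmemK b⟩
  set φ : Bc →ₗ[k] ↥(A ⊓ LinearMap.ker f) :=
    LinearMap.codRestrict _ ((TensorProduct.mk k B C).flip c₀ ∘ₗ Bc.subtype) hmem with hφ
  have hφval : ∀ x : Bc, (φ x : B ⊗[k] C) = (x : B) ⊗ₜ[k] c₀ := fun x => rfl
  have hinj : Function.Injective φ := by
    intro x y hxy
    have : (φ x : B ⊗[k] C) = (φ y : B ⊗[k] C) := by rw [hxy]
    rw [hφval, hφval] at this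
    exact Subtype.ext (aux_tmul_right_inj hc₀ this)
  have hsurj : Function.Surjective φ := by
    rintro ⟨x, hxA, hxK⟩
    -- use exactness to write x = b ⊗ c₀
    have hexact : Function.Exact (LinearMap.lTensor B (LinearMap.toSpanSingleton k C c₀)) f := by
      apply lTensor_exact B (g := (Submodule.span k {c₀}).mkQ)
      · rw [LinearMap.exact_iff, Submodule.ker_mkQ, LinearMap.span_singleton_eq_range]
      · exact Submodule.mkQ_surjective _
    obtain ⟨y, hy⟩ := (hexact x).mp hxK
    set bb := (TensorProduct.rid k B) y with hbb
    have hyy : y = bb ⊗ₜ[k] (1 : k) := by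
      rw [hbb, ← TensorProduct.rid_symm_apply, LinearEquiv.symm_apply_apply]
    have hx : x = bb ⊗ₜ[k] c₀ := by
      rw [← hy, hyy, LinearMap.lTensor_tmul, LinearMap.toSpanSingleton_apply, one_smul]
    have hbbBc : bb ∈ Bc := by rw [hBc, mem_Bset, ← hx]; exact hxA
    refine ⟨⟨bb, hbbBc⟩, ?_⟩
    apply Subtype.ext
    rw [hφval]
    exact hx.symm
  exact (LinearEquiv.ofBijective φ ⟨hinj, hsurj⟩).finrank_eq

end Helpers

variable (k)

/-- Statement (G): all of `B` is covered, and all lines of `C` outside one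
distinguished line are covered.  Conclusion: `dim A ≥ dim B + dim C - 1`. -/
def GS (N : ℕ) : Prop :=
  ∀ (B C : Type v) [AddCommGroup B] [Module k B] [AddCommGroup C] [Module k C],
  ∀ [FiniteDimensional k B] [FiniteDimensional k C],
  ∀ (A : Submodule k (B ⊗[k] C)) (c₀ : C), c₀ ≠ 0 →
  (∀ b : B, b ≠ 0 → ∃ c : C, c ≠ 0 ∧ b ⊗ₜ[k] c ∈ A) →
  (∀ c : C, c ∉ Submodule.span k {c₀} → ∃ b : B, b ≠ 0 ∧ b ⊗ₜ[k] c ∈ A) →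
  finrank k B + finrank k C ≤ N →
  finrank k B + finrank k C ≤ finrank k A + 1

/-- Statement (M): relative version with a nonzero bad subspace `B₀`. -/
def MS (N : ℕ) : Prop :=
  ∀ (B C : Type v) [AddCommGroup B] [Module k B] [AddCommGroup C] [Module k C],
  ∀ [FiniteDimensional k B] [FiniteDimensional k C],
  ∀ (A : Submodule k (B ⊗[k] C)) (B₀ : Submodule k B), B₀ ≠ ⊥ →
  (∀ b : B, b ∉ B₀ → ∃ c : C, c ≠ 0 ∧ b ⊗ₜ[k] c ∈ A) →
  (∀ c : C, c ≠ 0 → ∃ b : B, b ≠ 0 ∧ b ⊗ₜ[k] c ∈ A) →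
  finrank k B + finrank k C ≤ N →
  finrank k B + finrank k C ≤ finrank k A + finrank k B₀

/-- Statement (K): as (M) but additionally `A` meets `B₀ ⊗ C` trivially. -/
def KS (N : ℕ) : Prop :=
  ∀ (B C : Type v) [AddCommGroup B] [Module k B] [AddCommGroup C] [Module k C],
  ∀ [FiniteDimensional k B] [FiniteDimensional k C],
  ∀ (A : Submodule k (B ⊗[k] C)) (B₀ : Submodule k B), B₀ ≠ ⊥ →
  A ⊓ LinearMap.ker (LinearMap.rTensor C B₀.mkQ) = ⊥ →
  (∀ b : B, b ∉ B₀ → ∃ c : C, c ≠ 0 ∧ b ⊗ₜ[k] c ∈ A) →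
  (∀ c : C, c ≠ 0 → ∃ b : B, b ≠ 0 ∧ b ⊗ₜ[k] c ∈ A) →
  finrank k B + finrank k C ≤ N →
  finrank k B + finrank k C ≤ finrank k A + finrank k B₀

end Master
section Master2

variable {k : Type uk} [Field k]

/-- If every line of `C` is covered, then `dim A ≥ dim C`. -/
theorem aux_ES (B : Type v) [AddCommGroup B] [Module k B] [FiniteDimensional k B] :
    ∀ (mm : ℕ) (C : Type v) [AddCommGroup C] [Module k C] [FiniteDimensional k C]
      (A : Submodule k (B ⊗[k] C)),
      (∀ c : C, c ≠ 0 → ∃ b : B, b ≠ 0 ∧ b ⊗ₜ[k] c ∈ A) →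
      finrank k C ≤ mm → finrank k C ≤ finrank k A := by
  intro mm
  induction mm with
  | zero => intro C _ _ _ A _ h; omega
  | succ mm ih =>
    intro C _ _ _ A h2 hle
    rcases Nat.eq_zero_or_pos (finrank k C) with h0 | h0
    · omega
    · have : Nontrivial C := Module.nontrivial_of_finrank_pos h0
      obtain ⟨c₀, hc₀⟩ := exists_ne (0 : C)
      obtain ⟨b₀, hb₀, hmem₀⟩ := h2 c₀ hc₀
      have hquot := aux_line_quot_dim (k := k) A hc₀
      have hq : finrank k (C ⧸ Submodule.span k {c₀}) + 1 = finrank k C := by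
        have h1 := Submodule.finrank_quotient_add_finrank (Submodule.span k {c₀})
        rw [finrank_span_singleton hc₀] at h1
        omega
      have hBc : 1 ≤ finrank k (A.comap ((TensorProduct.mk k B C).flip c₀)) := by
        by_contra h
        have h' : finrank k (A.comap ((TensorProduct.mk k B C).flip c₀)) = 0 := by omega
        rw [Submodule.finrank_eq_zero] at h'
        have : b₀ ∈ A.comap ((TensorProduct.mk k B C).flip c₀) := mem_Bset.mpr hmem₀
        rw [h'] at this
        exact hb₀ (Submodule.mem_bot k |>.mp this)
      have h2' : ∀ cc : C ⧸ Submodule.span k {c₀}, cc ≠ 0 →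
          ∃ b : B, b ≠ 0 ∧ b ⊗ₜ[k] cc ∈ A.map (LinearMap.lTensor B (Submodule.span k {c₀}).mkQ) := by
        intro cc hcc
        obtain ⟨c, rfl⟩ := Submodule.mkQ_surjective _ cc
        have hc : c ≠ 0 := by
          rintro rfl
          simp at hcc
        obtain ⟨b, hb, hmem⟩ := h2 c hc
        exact ⟨b, hb, Submodule.mem_map.mpr ⟨b ⊗ₜ[k] c, hmem, by simp⟩⟩
      have := ih (C ⧸ Submodule.span k {c₀})
        (A.map (LinearMap.lTensor B (Submodule.span k {c₀}).mkQ)) h2' (by omega)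
      omega

end Master2
section Master3

variable {k : Type uk} [Field k]

theorem aux_master (N : ℕ) : GS.{uk, v} k N ∧ KS.{uk, v} k N ∧ MS.{uk, v} k N := by
  induction N using Nat.strong_induction_on with
  | _ N IH =>
  -- ===================================== G =====================================
  have hG : GS.{uk, v} k N := by
    intro B C _ _ _ _ _ _ A c₀ hc₀ h1 h2 hN
    by_cases hm : finrank k C = 1
    · -- C is the line spanned by c₀
      have hspan : Submodule.span k {c₀} = ⊤ := by
        apply Submodule.eq_top_of_finrank_eq
        rw [finrank_span_singleton hc₀, hm]
      have hmem : ∀ b : B, ((TensorProduct.mk k B C).flip c₀) b ∈ A := by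
        intro b
        rcases eq_or_ne b 0 with rfl | hb
        · simpa using A.zero_mem
        · obtain ⟨c, hc, hcA⟩ := h1 b hb
          exact aux_mem_of_span (by rw [hspan]; trivial) hc hcA
      have hinj : Function.Injective
          (LinearMap.codRestrict A ((TensorProduct.mk k B C).flip c₀) hmem) := by
        intro x y hxy
        have hxy' : x ⊗ₜ[k] c₀ = y ⊗ₜ[k] c₀ := congrArg Subtype.val hxy
        exact aux_tmul_right_inj hc₀ hxy'
      have hle := LinearMap.finrank_le_finrank_of_injective hinj
      omega
    · have hntC : Nontrivial C := ⟨c₀, 0, hc₀⟩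
      have hm1 : 0 < finrank k C := Module.finrank_pos
      have hspanne : Submodule.span k {c₀} ≠ ⊤ := by
        intro h
        have h' := finrank_span_singleton (K := k) hc₀
        rw [h, finrank_top] at h'
        omega
      have hex : ∃ c₁ : C, c₁ ∉ Submodule.span k {c₀} := by
        by_contra h
        push_neg at h
        exact hspanne (Submodule.eq_top_iff'.mpr h)
      obtain ⟨c₁, hc₁⟩ := hex
      have hc₁0 : c₁ ≠ 0 := fun h => hc₁ (h ▸ Submodule.zero_mem _)
      obtain ⟨b₁, hb₁, hb₁A⟩ := h2 c₁ hc₁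
      have hB₁ne : A.comap ((TensorProduct.mk k B C).flip c₁) ≠ ⊥ := by
        intro h
        have hmem : b₁ ∈ A.comap ((TensorProduct.mk k B C).flip c₁) := mem_Bset.mpr hb₁A
        rw [h] at hmem
        exact hb₁ (Submodule.mem_bot k |>.mp hmem)
      have hq1 : finrank k (C ⧸ Submodule.span k {c₁}) + 1 = finrank k C := by
        have hh := Submodule.finrank_quotient_add_finrank (Submodule.span k {c₁})
        rw [finrank_span_singleton hc₁0] at hh
        omega
      obtain ⟨-, -, hMS⟩ := IH (N - 1) (by omega)
      have h1' : ∀ b : B, b ∉ A.comap ((TensorProduct.mk k B C).flip c₁) →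
          ∃ cc : C ⧸ Submodule.span k {c₁}, cc ≠ 0 ∧
            b ⊗ₜ[k] cc ∈ A.map (LinearMap.lTensor B (Submodule.span k {c₁}).mkQ) := by
        intro b hb
        have hb0 : b ≠ 0 := by rintro rfl; exact hb (Submodule.zero_mem _)
        obtain ⟨c, hc0, hcA⟩ := h1 b hb0
        refine ⟨(Submodule.span k {c₁}).mkQ c, ?_,
          Submodule.mem_map.mpr ⟨b ⊗ₜ[k] c, hcA, by simp⟩⟩
        rw [Submodule.mkQ_apply, ne_eq, Submodule.Quotient.mk_eq_zero]
        intro hcs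
        exact hb (mem_Bset.mpr (aux_mem_of_span hcs hc0 hcA))
      have h2' : ∀ cc : C ⧸ Submodule.span k {c₁}, cc ≠ 0 →
          ∃ b : B, b ≠ 0 ∧
            b ⊗ₜ[k] cc ∈ A.map (LinearMap.lTensor B (Submodule.span k {c₁}).mkQ) := by
        intro cc _
        obtain ⟨c, rfl⟩ := Submodule.mkQ_surjective _ cc
        by_cases hcc₀ : c ∈ Submodule.span k {c₀}
        · have hsum : c + c₁ ∉ Submodule.span k {c₀} := by
            intro h
            exact hc₁ (by simpa using Submodule.sub_mem _ h hcc₀)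
          obtain ⟨b, hb, hbA⟩ := h2 (c + c₁) hsum
          refine ⟨b, hb, ?_⟩
          have himg : (Submodule.span k {c₁}).mkQ (c + c₁) = (Submodule.span k {c₁}).mkQ c := by
            have h0 : (Submodule.span k {c₁}).mkQ c₁ = 0 := by
              rw [Submodule.mkQ_apply, Submodule.Quotient.mk_eq_zero]
              exact Submodule.mem_span_singleton_self c₁
            rw [map_add, h0, add_zero]
          rw [← himg]
          exact Submodule.mem_map.mpr ⟨b ⊗ₜ[k] (c + c₁), hbA, by simp⟩
        · obtain ⟨b, hb, hbA⟩ := h2 c hcc₀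
          exact ⟨b, hb, Submodule.mem_map.mpr ⟨b ⊗ₜ[k] c, hbA, by simp⟩⟩
      have key := hMS B (C ⧸ Submodule.span k {c₁})
        (A.map (LinearMap.lTensor B (Submodule.span k {c₁}).mkQ))
        (A.comap ((TensorProduct.mk k B C).flip c₁)) hB₁ne h1' h2' (by omega)
      have hdim := aux_line_quot_dim (k := k) A hc₁0
      omega
  -- ===================================== K =====================================
  have hK : KS.{uk, v} k N := by
    intro B C _ _ _ _ _ _ A B₀ hB₀ hker h1 h2 hN
    have hd1 : 1 ≤ finrank k B₀ := by
      by_contra h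
      exact hB₀ (Submodule.finrank_eq_zero.mp (by omega))
    have hfleB : finrank k B₀ ≤ finrank k B := Submodule.finrank_le B₀
    by_cases hd : finrank k B₀ = 1
    · -- base case: apply G to the flipped tensor
      obtain ⟨b₀, hb₀B, hb₀⟩ := Submodule.exists_mem_ne_zero_of_ne_bot hB₀
      have hspan : Submodule.span k {b₀} = B₀ := by
        apply Submodule.eq_of_le_of_finrank_le
        · rw [Submodule.span_le, Set.singleton_subset_iff]; exact hb₀B
        · rw [finrank_span_singleton hb₀, hd]
      have hfr : finrank k (A.map ((TensorProduct.comm k B C : B ⊗[k] C ≃ₗ[k] C ⊗[k] B)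
          : B ⊗[k] C →ₗ[k] C ⊗[k] B)) = finrank k A :=
        LinearEquiv.finrank_map_eq _ _
      have h1' : ∀ c : C, c ≠ 0 → ∃ b : B, b ≠ 0 ∧
          c ⊗ₜ[k] b ∈ A.map ((TensorProduct.comm k B C : B ⊗[k] C ≃ₗ[k] C ⊗[k] B)
            : B ⊗[k] C →ₗ[k] C ⊗[k] B) := by
        intro c hc
        obtain ⟨b, hb, hbA⟩ := h2 c hc
        exact ⟨b, hb, Submodule.mem_map.mpr ⟨b ⊗ₜ[k] c, hbA, by simp⟩⟩
      have h2' : ∀ b : B, b ∉ Submodule.span k {b₀} → ∃ c : C, c ≠ 0 ∧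
          c ⊗ₜ[k] b ∈ A.map ((TensorProduct.comm k B C : B ⊗[k] C ≃ₗ[k] C ⊗[k] B)
            : B ⊗[k] C →ₗ[k] C ⊗[k] B) := by
        intro b hb
        rw [hspan] at hb
        obtain ⟨c, hc, hcA⟩ := h1 b hb
        exact ⟨c, hc, Submodule.mem_map.mpr ⟨b ⊗ₜ[k] c, hcA, by simp⟩⟩
      have key := hG C B
        (A.map ((TensorProduct.comm k B C : B ⊗[k] C ≃ₗ[k] C ⊗[k] B)
          : B ⊗[k] C →ₗ[k] C ⊗[k] B)) b₀ hb₀ h1' h2' (by omega)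
      omega
    · -- descent: quotient B by a line inside B₀
      obtain ⟨b, hbB₀, hb0⟩ := Submodule.exists_mem_ne_zero_of_ne_bot hB₀
      have hle : Submodule.span k {b} ≤ B₀ := by
        rw [Submodule.span_le, Set.singleton_subset_iff]; exact hbB₀
      have hker_le : Submodule.span k {b} ≤ LinearMap.ker B₀.mkQ := by
        rw [Submodule.ker_mkQ]; exact hle
      have hfact : B₀.mkQ = (Submodule.liftQ (Submodule.span k {b}) B₀.mkQ hker_le).comp
          (Submodule.span k {b}).mkQ :=
        ((Submodule.span k {b}).liftQ_mkQ B₀.mkQ hker_le).symm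
      have hkerle2 : LinearMap.ker (LinearMap.rTensor C (Submodule.span k {b}).mkQ)
          ≤ LinearMap.ker (LinearMap.rTensor C B₀.mkQ) := by
        intro x hx
        have hx' : LinearMap.rTensor C (Submodule.span k {b}).mkQ x = 0 := hx
        show LinearMap.rTensor C B₀.mkQ x = 0
        rw [hfact, LinearMap.rTensor_comp, LinearMap.comp_apply, hx', map_zero]
      have hker₁ : A ⊓ LinearMap.ker (LinearMap.rTensor C (Submodule.span k {b}).mkQ) = ⊥ :=
        le_bot_iff.mp (le_trans (inf_le_inf_left A hkerle2) (le_of_eq hker))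
      have hdimA : finrank k (A.map (LinearMap.rTensor C (Submodule.span k {b}).mkQ))
          = finrank k A := by
        have h := aux_finrank_map_add_inf (LinearMap.rTensor C (Submodule.span k {b}).mkQ) A
        rw [hker₁] at h
        simpa using h
      have hdB₀ : finrank k (B₀.map (Submodule.span k {b}).mkQ) + 1 = finrank k B₀ := by
        have h := aux_finrank_map_add_inf ((Submodule.span k {b}).mkQ) B₀
        rw [Submodule.ker_mkQ, inf_eq_right.mpr hle, finrank_span_singleton hb0] at h
        omega
      have hB₀'ne : B₀.map (Submodule.span k {b}).mkQ ≠ ⊥ := by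
        intro h
        rw [← Submodule.finrank_eq_zero] at h
        omega
      -- the induced map θ on quotients is injective
      have hthker : LinearMap.ker ((B₀.map (Submodule.span k {b}).mkQ).mkQ ∘ₗ
          (Submodule.span k {b}).mkQ) = B₀ := by
        rw [LinearMap.ker_comp, Submodule.ker_mkQ, Submodule.comap_map_mkQ]
        exact sup_eq_right.mpr hle
      have hker' : (A.map (LinearMap.rTensor C (Submodule.span k {b}).mkQ)) ⊓
          LinearMap.ker (LinearMap.rTensor C (B₀.map (Submodule.span k {b}).mkQ).mkQ) = ⊥ := by
        rw [Submodule.eq_bot_iff]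
        rintro x ⟨hxA', hxk⟩
        obtain ⟨y, hyA, rfl⟩ := Submodule.mem_map.mp hxA'
        have hxk' : LinearMap.rTensor C (Submodule.map (Submodule.span k {b}).mkQ B₀).mkQ
            (LinearMap.rTensor C (Submodule.span k {b}).mkQ y) = 0 := hxk
        have hcalc : LinearMap.rTensor C ((B₀.map (Submodule.span k {b}).mkQ).mkQ ∘ₗ
            (Submodule.span k {b}).mkQ) y = 0 := by
          rw [LinearMap.rTensor_comp, LinearMap.comp_apply]
          exact hxk'
        have hfact2 : (B₀.map (Submodule.span k {b}).mkQ).mkQ ∘ₗ (Submodule.span k {b}).mkQ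
            = (Submodule.liftQ B₀ ((B₀.map (Submodule.span k {b}).mkQ).mkQ ∘ₗ
                (Submodule.span k {b}).mkQ) (le_of_eq hthker.symm)) ∘ₗ B₀.mkQ :=
          (B₀.liftQ_mkQ _ _).symm
        rw [hfact2, LinearMap.rTensor_comp, LinearMap.comp_apply] at hcalc
        have hθinj : Function.Injective (Submodule.liftQ B₀
            ((B₀.map (Submodule.span k {b}).mkQ).mkQ ∘ₗ (Submodule.span k {b}).mkQ)
            (le_of_eq hthker.symm)) := by
          rw [← LinearMap.ker_eq_bot]
          exact Submodule.ker_liftQ_eq_bot _ _ _ (le_of_eq hthker)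
        have hθTinj := Module.Flat.rTensor_preserves_injective_linearMap (M := C) _ hθinj
        have h0 : LinearMap.rTensor C B₀.mkQ y = 0 := by
          apply hθTinj
          rw [map_zero]
          exact hcalc
        have hbot : y ∈ A ⊓ LinearMap.ker (LinearMap.rTensor C B₀.mkQ) :=
          ⟨hyA, LinearMap.mem_ker.mpr h0⟩
        rw [hker, Submodule.mem_bot] at hbot
        rw [hbot, map_zero]
      have h1' : ∀ bb : B ⧸ Submodule.span k {b}, bb ∉ B₀.map (Submodule.span k {b}).mkQ →
          ∃ c : C, c ≠ 0 ∧
            bb ⊗ₜ[k] c ∈ A.map (LinearMap.rTensor C (Submodule.span k {b}).mkQ) := by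
        intro bb hbb
        obtain ⟨y, rfl⟩ := Submodule.mkQ_surjective _ bb
        have hy : y ∉ B₀ := fun h => hbb (Submodule.mem_map_of_mem h)
        obtain ⟨c, hc, hcA⟩ := h1 y hy
        exact ⟨c, hc, Submodule.mem_map.mpr ⟨y ⊗ₜ[k] c, hcA, by simp⟩⟩
      have h2' : ∀ c : C, c ≠ 0 → ∃ bb : B ⧸ Submodule.span k {b}, bb ≠ 0 ∧
          bb ⊗ₜ[k] c ∈ A.map (LinearMap.rTensor C (Submodule.span k {b}).mkQ) := by
        intro c hc
        obtain ⟨b', hb', hb'A⟩ := h2 c hc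
        refine ⟨(Submodule.span k {b}).mkQ b', ?_,
          Submodule.mem_map.mpr ⟨b' ⊗ₜ[k] c, hb'A, by simp⟩⟩
        rw [ne_eq, Submodule.mkQ_apply, Submodule.Quotient.mk_eq_zero]
        intro hmem
        have h0 : LinearMap.rTensor C B₀.mkQ (b' ⊗ₜ[k] c) = 0 := by
          rw [LinearMap.rTensor_tmul]
          have hz : B₀.mkQ b' = 0 := by
            rw [Submodule.mkQ_apply, Submodule.Quotient.mk_eq_zero]
            exact hle hmem
          rw [hz, TensorProduct.zero_tmul]
        have hbot : b' ⊗ₜ[k] c ∈ A ⊓ LinearMap.ker (LinearMap.rTensor C B₀.mkQ) :=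
          ⟨hb'A, LinearMap.mem_ker.mpr h0⟩
        rw [hker, Submodule.mem_bot] at hbot
        exact aux_tmul_ne_zero hb' hc hbot
      obtain ⟨-, hKS', -⟩ := IH (N - 1) (by omega)
      have hqB : finrank k (B ⧸ Submodule.span k {b}) + 1 = finrank k B := by
        have hh := Submodule.finrank_quotient_add_finrank (Submodule.span k {b})
        rw [finrank_span_singleton hb0] at hh
        omega
      have key := hKS' (B ⧸ Submodule.span k {b}) C
        (A.map (LinearMap.rTensor C (Submodule.span k {b}).mkQ))
        (B₀.map (Submodule.span k {b}).mkQ) hB₀'ne hker' h1' h2' (by omega)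
      omega
  -- ===================================== M =====================================
  have hM : MS.{uk, v} k N := by
    intro B C _ _ _ _ _ _ A B₀ hB₀ h1 h2 hN
    by_cases htop : B₀ = ⊤
    · subst htop
      have hES := aux_ES (k := k) B (finrank k C) C A h2 le_rfl
      have htop2 : finrank k (⊤ : Submodule k B) = finrank k B := finrank_top k B
      omega
    · have hex : ∃ b₁ : B, b₁ ∉ B₀ := by
        by_contra h
        push_neg at h
        exact htop (Submodule.eq_top_iff'.mpr h)
      obtain ⟨b₁, hb₁⟩ := hex
      obtain ⟨cw, hcw, -⟩ := h1 b₁ hb₁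
      have hntC : Nontrivial C := ⟨cw, 0, hcw⟩
      have hm1 : 0 < finrank k C := Module.finrank_pos
      have hd1 : 1 ≤ finrank k B₀ := by
        by_contra h
        exact hB₀ (Submodule.finrank_eq_zero.mp (by omega))
      have hfleB : finrank k B₀ ≤ finrank k B := Submodule.finrank_le B₀
      by_cases hc1 : ∃ c : C, c ≠ 0 ∧ B₀ ⊓ A.comap ((TensorProduct.mk k B C).flip c) ≠ ⊥
      · -- good case: quotient C by the line spanned by c₂
        obtain ⟨c₂, hc₂, hinf⟩ := hc1
        obtain ⟨-, -, hMS'⟩ := IH (N - 1) (by omega)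
        have h1' : ∀ bb : B, bb ∉ B₀ ⊔ A.comap ((TensorProduct.mk k B C).flip c₂) →
            ∃ cc : C ⧸ Submodule.span k {c₂}, cc ≠ 0 ∧
              bb ⊗ₜ[k] cc ∈ A.map (LinearMap.lTensor B (Submodule.span k {c₂}).mkQ) := by
          intro bb hbb
          have hbbB₀ : bb ∉ B₀ := fun h => hbb (Submodule.mem_sup_left h)
          have hbbBc : bb ∉ A.comap ((TensorProduct.mk k B C).flip c₂) :=
            fun h => hbb (Submodule.mem_sup_right h)
          obtain ⟨c, hc, hcA⟩ := h1 bb hbbB₀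
          refine ⟨(Submodule.span k {c₂}).mkQ c, ?_,
            Submodule.mem_map.mpr ⟨bb ⊗ₜ[k] c, hcA, by simp⟩⟩
          rw [Submodule.mkQ_apply, ne_eq, Submodule.Quotient.mk_eq_zero]
          intro hcs
          exact hbbBc (mem_Bset.mpr (aux_mem_of_span hcs hc hcA))
        have h2' : ∀ cc : C ⧸ Submodule.span k {c₂}, cc ≠ 0 →
            ∃ bb : B, bb ≠ 0 ∧
              bb ⊗ₜ[k] cc ∈ A.map (LinearMap.lTensor B (Submodule.span k {c₂}).mkQ) := by
          intro cc hcc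
          obtain ⟨c, rfl⟩ := Submodule.mkQ_surjective _ cc
          have hc : c ≠ 0 := by rintro rfl; simp at hcc
          obtain ⟨bb, hbb, hbbA⟩ := h2 c hc
          exact ⟨bb, hbb, Submodule.mem_map.mpr ⟨bb ⊗ₜ[k] c, hbbA, by simp⟩⟩
        have hsupne : B₀ ⊔ A.comap ((TensorProduct.mk k B C).flip c₂) ≠ ⊥ :=
          fun h => hB₀ (le_bot_iff.mp (le_sup_left.trans (le_of_eq h)))
        have hquot := aux_line_quot_dim (k := k) A hc₂
        have hsupinf := Submodule.finrank_sup_add_finrank_inf_eq B₀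
          (A.comap ((TensorProduct.mk k B C).flip c₂))
        have hinf1 : 1 ≤ finrank k ↥(B₀ ⊓ A.comap ((TensorProduct.mk k B C).flip c₂)) := by
          by_contra h
          exact hinf (Submodule.finrank_eq_zero.mp (by omega))
        have hqC : finrank k (C ⧸ Submodule.span k {c₂}) + 1 = finrank k C := by
          have hh := Submodule.finrank_quotient_add_finrank (Submodule.span k {c₂})
          rw [finrank_span_singleton hc₂] at hh
          omega
        have key := hMS' B (C ⧸ Submodule.span k {c₂})
          (A.map (LinearMap.lTensor B (Submodule.span k {c₂}).mkQ))
          (B₀ ⊔ A.comap ((TensorProduct.mk k B C).flip c₂)) hsupne h1' h2' (by omega)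
        omega
      · push_neg at hc1
        have hF1 : ∀ b' ∈ B₀, ∀ c : C, c ≠ 0 → b' ⊗ₜ[k] c ∈ A → b' = 0 := by
          intro b' hb' c hc hmem
          have hh : b' ∈ B₀ ⊓ A.comap ((TensorProduct.mk k B C).flip c) :=
            ⟨hb', mem_Bset.mpr hmem⟩
          rw [hc1 c hc] at hh
          exact Submodule.mem_bot k |>.mp hh
        by_cases hkercase : A ⊓ LinearMap.ker (LinearMap.rTensor C B₀.mkQ) = ⊥
        · exact hK B C A B₀ hB₀ hkercase h1 h2 hN
        · have hkge : 1 ≤ finrank k ↥(A ⊓ LinearMap.ker (LinearMap.rTensor C B₀.mkQ)) := by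
            by_contra h
            exact hkercase (Submodule.finrank_eq_zero.mp (by omega))
          have hdim := aux_finrank_map_add_inf (LinearMap.rTensor C B₀.mkQ) A
          have h1h : ∀ bb : B ⧸ B₀, bb ≠ 0 →
              ∃ c : C, c ≠ 0 ∧ bb ⊗ₜ[k] c ∈ A.map (LinearMap.rTensor C B₀.mkQ) := by
            intro bb hbb
            obtain ⟨y, rfl⟩ := Submodule.mkQ_surjective _ bb
            have hy : y ∉ B₀ := by
              intro h
              apply hbb
              rw [Submodule.mkQ_apply, Submodule.Quotient.mk_eq_zero]
              exact h
            obtain ⟨c, hc, hcA⟩ := h1 y hy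
            exact ⟨c, hc, Submodule.mem_map.mpr ⟨y ⊗ₜ[k] c, hcA, by simp⟩⟩
          have h2h : ∀ c : C, c ∉ Submodule.span k {cw} →
              ∃ bb : B ⧸ B₀, bb ≠ 0 ∧ bb ⊗ₜ[k] c ∈ A.map (LinearMap.rTensor C B₀.mkQ) := by
            intro c hc
            have hc0 : c ≠ 0 := fun h => hc (h ▸ Submodule.zero_mem _)
            obtain ⟨b', hb', hb'A⟩ := h2 c hc0
            refine ⟨B₀.mkQ b', ?_, Submodule.mem_map.mpr ⟨b' ⊗ₜ[k] c, hb'A, by simp⟩⟩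
            rw [ne_eq, Submodule.mkQ_apply, Submodule.Quotient.mk_eq_zero]
            intro hmem
            exact hb' (hF1 b' hmem c hc0 hb'A)
          have hqB : finrank k (B ⧸ B₀) + finrank k B₀ = finrank k B :=
            Submodule.finrank_quotient_add_finrank B₀
          obtain ⟨hGS', -, -⟩ := IH (N - 1) (by omega)
          have key := hGS' (B ⧸ B₀) C (A.map (LinearMap.rTensor C B₀.mkQ)) cw hcw h1h h2h
            (by omega)
          omega
  exact ⟨hG, hK, hM⟩

end Master3
/-- **Proposition 2.1** (de Seguins Pazzis / Bergman). If `A` is a subspace of `B ⊗ C`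
containing, for each nonzero `b`, a nonzero pure tensor `b ⊗ c`, and dually, then
`dim A ≥ dim B + dim C - 1`. -/
theorem stmt0 (k B C : Type*) [Field k] [AddCommGroup B] [Module k B]
    [AddCommGroup C] [Module k C] [FiniteDimensional k B] [FiniteDimensional k C]
    [Nontrivial B] [Nontrivial C]
    (A : Submodule k (B ⊗[k] C))
    (hB : ∀ b : B, b ≠ 0 → ∃ c : C, c ≠ 0 ∧ b ⊗ₜ[k] c ∈ A)
    (hC : ∀ c : C, c ≠ 0 → ∃ b : B, b ≠ 0 ∧ b ⊗ₜ[k] c ∈ A) :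
    finrank k B + finrank k C - 1 ≤ finrank k A := by
  classical
  have hn : 0 < finrank k B := Module.finrank_pos
  have hm : 0 < finrank k C := Module.finrank_pos
  let eB : B ≃ₗ[k] (Fin (finrank k B) → k) := (Module.finBasis k B).equivFun
  let eC : C ≃ₗ[k] (Fin (finrank k C) → k) := (Module.finBasis k C).equivFun
  let E : (B ⊗[k] C) ≃ₗ[k] ((Fin (finrank k B) → k) ⊗[k] (Fin (finrank k C) → k)) :=
    TensorProduct.congr eB eC
  have hfr : finrank k (A.map (E : (B ⊗[k] C) →ₗ[k]
      ((Fin (finrank k B) → k) ⊗[k] (Fin (finrank k C) → k)))) = finrank k A :=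
    LinearEquiv.finrank_map_eq _ _
  have h1' : ∀ x : Fin (finrank k B) → k, x ≠ 0 →
      ∃ y : Fin (finrank k C) → k, y ≠ 0 ∧ x ⊗ₜ[k] y ∈ A.map (E : (B ⊗[k] C) →ₗ[k]
        ((Fin (finrank k B) → k) ⊗[k] (Fin (finrank k C) → k))) := by
    intro x hx
    obtain ⟨c, hc, hcA⟩ := hB (eB.symm x) (eB.symm.map_ne_zero_iff.mpr hx)
    refine ⟨eC c, eC.map_ne_zero_iff.mpr hc,
      Submodule.mem_map.mpr ⟨eB.symm x ⊗ₜ[k] c, hcA, ?_⟩⟩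
    simp [E]
  have h2' : ∀ y : Fin (finrank k C) → k, y ≠ 0 →
      ∃ x : Fin (finrank k B) → k, x ≠ 0 ∧ x ⊗ₜ[k] y ∈ A.map (E : (B ⊗[k] C) →ₗ[k]
        ((Fin (finrank k B) → k) ⊗[k] (Fin (finrank k C) → k))) := by
    intro y hy
    obtain ⟨b, hb, hbA⟩ := hC (eC.symm y) (eC.symm.map_ne_zero_iff.mpr hy)
    refine ⟨eB b, eB.map_ne_zero_iff.mpr hb,
      Submodule.mem_map.mpr ⟨b ⊗ₜ[k] (eC.symm y), hbA, ?_⟩⟩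
    simp [E]
  obtain ⟨cnz, hcnz⟩ := exists_ne (0 : C)
  have hc₀ : eC cnz ≠ 0 := eC.map_ne_zero_iff.mpr hcnz
  obtain ⟨hGS, -, -⟩ := aux_master (k := k) (finrank k B + finrank k C)
  have hffB : finrank k (Fin (finrank k B) → k) = finrank k B := by
    rw [Module.finrank_fin_fun]
  have hffC : finrank k (Fin (finrank k C) → k) = finrank k C := by
    rw [Module.finrank_fin_fun]
  have key := hGS (Fin (finrank k B) → k) (Fin (finrank k C) → k)
    (A.map (E : (B ⊗[k] C) →ₗ[k]
      ((Fin (finrank k B) → k) ⊗[k] (Fin (finrank k C) → k)))) (eC cnz) hc₀ h1'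
    (fun y hy => h2' y (fun h => hy (h ▸ Submodule.zero_mem _)))
    (by omega)
  omega
end

section
/- Let A, B, C be finite-dimensional vector spaces over a field k and f : A × B → C a bilinear map such that every nonzero a ∈ A induces a nonzero linear map f(a,−) : B → C, but this property fails on restriction to every proper subspace of B (i.e., for every proper subspace B₀ ⊂ B some nonzero a ∈ A satisfies f(a, B₀) = 0), and fails on composition with the quotient map onto every proper quotient of C (i.e., for every nonzero subspace C₀ ⊆ C some nonzero a ∈ A satisfies f(a, B) ⊆ C₀, where we take C₀ the kernel of the quotient). Then dim(A) ≥ dim(B) + dim(C) − 1. -/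
set_option synthInstance.maxHeartbeats 1000000
set_option maxHeartbeats 4000000

open Module

universe u v

section helpers

variable {k : Type*} [Field k]
variable {B : Type u} {C : Type v} [AddCommGroup B] [Module k B] [AddCommGroup C] [Module k C]

lemma smulRight_smul_left (ℓ : B →ₗ[k] k) (c : C) (t : k) :
    ((t • ℓ).smulRight c) = t • (ℓ.smulRight c) := by
  ext b; simp [mul_smul]

lemma smulRight_smul_right (ℓ : B →ₗ[k] k) (c : C) (t : k) :
    (ℓ.smulRight (t • c)) = t • (ℓ.smulRight c) := by
  ext b
  rw [LinearMap.smulRight_apply, LinearMap.smul_apply, LinearMap.smulRight_apply, smul_comm]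

lemma exists_apply_ne_zero {ℓ : B →ₗ[k] k} (hℓ : ℓ ≠ 0) : ∃ b, ℓ b ≠ 0 := by
  by_contra h; push_neg at h
  exact hℓ (LinearMap.ext fun b => by simp [h])

lemma smulRight_ne_zero {ℓ : B →ₗ[k] k} {c : C} (hℓ : ℓ ≠ 0) (hc : c ≠ 0) :
    ℓ.smulRight c ≠ 0 := by
  obtain ⟨b, hb⟩ := exists_apply_ne_zero hℓ
  intro h
  have h2 := DFunLike.congr_fun h b
  simp only [LinearMap.smulRight_apply, LinearMap.zero_apply, smul_eq_zero] at h2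
  tauto

lemma exists_eval_one {V : Type*} [AddCommGroup V] [Module k V] {b : V} (hb : b ≠ 0) :
    ∃ ℓ : V →ₗ[k] k, ℓ b = 1 := by
  have h := (Module.forall_dual_apply_eq_zero_iff k b).not.2 hb
  push_neg at h
  obtain ⟨φ, hφ⟩ := h
  exact ⟨(φ b)⁻¹ • φ, by simp [inv_mul_cancel₀ hφ]⟩

lemma eq_smul_of_forall_ker {ℓ₀ ℓ : B →ₗ[k] k} (h0 : ℓ₀ ≠ 0)
    (h : ∀ b, ℓ₀ b = 0 → ℓ b = 0) : ∃ t : k, ℓ = t • ℓ₀ := by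
  obtain ⟨b₀, hb₀⟩ := exists_apply_ne_zero h0
  refine ⟨ℓ b₀ / ℓ₀ b₀, LinearMap.ext fun b => ?_⟩
  have hker : ℓ₀ (b - (ℓ₀ b / ℓ₀ b₀) • b₀) = 0 := by
    simp [div_mul_cancel₀, hb₀]
  have := h _ hker
  simp only [map_sub, map_smul, smul_eq_mul, sub_eq_zero] at this
  simp only [LinearMap.smul_apply, smul_eq_mul]
  rw [this]
  field_simp

/-- rank ones with independent `c`'s and nonzero `ℓ`'s are independent. -/
lemma indep_of_indep_right {ι : Type*} [Fintype ι] {ℓ : ι → (B →ₗ[k] k)} {c : ι → C}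
    (hc : LinearIndependent k c) (hℓ : ∀ i, ℓ i ≠ 0) :
    LinearIndependent k (fun i => (ℓ i).smulRight (c i)) := by
  rw [Fintype.linearIndependent_iff]
  intro g hg i
  by_contra hgi
  obtain ⟨b, hb⟩ := exists_apply_ne_zero (hℓ i)
  have h2 := DFunLike.congr_fun hg b
  simp only [LinearMap.coe_sum, Finset.sum_apply, LinearMap.smul_apply,
    LinearMap.smulRight_apply, LinearMap.zero_apply, smul_smul] at h2
  have := Fintype.linearIndependent_iff.1 hc _ h2 i
  simp only [mul_eq_zero] at this
  tauto

/-- rank ones with independent `ℓ`'s and nonzero `c`'s are independent. -/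
lemma indep_of_indep_left {ι : Type*} [Fintype ι] {ℓ : ι → (B →ₗ[k] k)} {c : ι → C}
    (hℓ : LinearIndependent k ℓ) (hc : ∀ i, c i ≠ 0) :
    LinearIndependent k (fun i => (ℓ i).smulRight (c i)) := by
  rw [Fintype.linearIndependent_iff]
  intro g hg i
  obtain ⟨γ, hγ⟩ := exists_eval_one (k := k) (hc i)
  have key : (∑ j, (g j * γ (c j)) • ℓ j) = 0 := by
    apply LinearMap.ext fun b => ?_
    have h2 := congrArg γ (DFunLike.congr_fun hg b)
    simp only [LinearMap.coe_sum, Finset.sum_apply, LinearMap.smul_apply,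
      LinearMap.smulRight_apply, LinearMap.zero_apply, map_zero, map_sum, map_smul] at h2 ⊢
    simpa [smul_eq_mul, mul_comm, mul_assoc, mul_left_comm] using h2
  have := Fintype.linearIndependent_iff.1 hℓ _ key i
  simpa [hγ] using this

lemma map_inf_ker_finrank {V : Type*} {W : Type*} [AddCommGroup V] [Module k V]
    [AddCommGroup W] [Module k W] [FiniteDimensional k V]
    (φ : V →ₗ[k] W) (M : Submodule k V) :
    finrank k ↥(M.map φ) + finrank k ↥(M ⊓ LinearMap.ker φ) = finrank k ↥M := by
  have h1 := LinearMap.finrank_range_add_finrank_ker (φ.comp M.subtype)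
  rw [LinearMap.range_comp, Submodule.range_subtype, LinearMap.ker_comp] at h1
  have e := LinearEquiv.finrank_eq (Submodule.equivMapOfInjective M.subtype
    (Submodule.injective_subtype M) (Submodule.comap M.subtype (LinearMap.ker φ)))
  rw [Submodule.map_comap_subtype] at e
  omega

lemma finite_of_findim_of_finite {V : Type*} [AddCommGroup V] [Module k V]
    [FiniteDimensional k V] [Finite k] : Finite V := by
  have e := (Module.finBasis k V).equivFun.toEquiv
  exact Finite.of_equiv _ e.symm

lemma nat_card_eq_pow {V : Type*} [AddCommGroup V] [Module k V]
    [FiniteDimensional k V] [Finite k] : Nat.card V = Nat.card k ^ finrank k V := by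
  have e := (Module.finBasis k V).equivFun.toEquiv
  rw [Nat.card_congr e, Nat.card_fun]
  simp

lemma card_level_set {W : Type*} [AddCommGroup W] [Module k W] [FiniteDimensional k W]
    [Finite k] (ξ : W →ₗ[k] k) {w₀ : W} (hw₀ : ξ w₀ = 1) :
    Nat.card {w : W // ξ w = 1} = Nat.card k ^ (finrank k W - 1) := by
  have e : {w : W // ξ w = 1} ≃ ↥(LinearMap.ker ξ) :=
    { toFun := fun w => ⟨w.1 - w₀, by simp [LinearMap.mem_ker, w.2, hw₀]⟩
      invFun := fun φ => ⟨φ.1 + w₀, by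
        have h2 := φ.2
        simp only [LinearMap.mem_ker] at h2
        simp [h2, hw₀]⟩
      left_inv := fun w => by ext; simp
      right_inv := fun φ => by ext; simp }
  rw [Nat.card_congr e, nat_card_eq_pow (k := k)]
  congr 1
  have hrt : LinearMap.range ξ = ⊤ := by
    rw [LinearMap.range_eq_top]
    intro t
    exact ⟨t • w₀, by simp [hw₀]⟩
  have h2 := LinearMap.finrank_range_add_finrank_ker ξ
  rw [hrt, finrank_top, Module.finrank_self] at h2
  omega

end helpers

section key

variable {k : Type*} [Field k]

theorem key (N : ℕ) : ∀ (B : Type u) (C : Type v) [AddCommGroup B] [Module k B]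
    [AddCommGroup C] [Module k C] [FiniteDimensional k B] [FiniteDimensional k C]
    (M : Submodule k (B →ₗ[k] C)),
    finrank k B + finrank k C ≤ N →
    (∀ ℓ : B →ₗ[k] k, ℓ ≠ 0 → ∃ c : C, c ≠ 0 ∧ ℓ.smulRight c ∈ M) →
    (∀ c : C, c ≠ 0 → ∃ ℓ : B →ₗ[k] k, ℓ ≠ 0 ∧ ℓ.smulRight c ∈ M) →
    finrank k B + finrank k C ≤ finrank k ↥M + 1 := by
  induction N with
  | zero =>
    intro B C _ _ _ _ _ _ M hN hi hii
    omega
  | succ N ih =>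
    intro B C _ _ _ _ _ _ M hN hi hii
    by_cases hn0 : finrank k B = 0
    · have hsB : Subsingleton B := Module.finrank_zero_iff.mp hn0
      have hm0 : finrank k C = 0 := by
        by_contra hm
        have : Nontrivial C := Module.finrank_pos_iff.mp (Nat.pos_of_ne_zero hm)
        obtain ⟨c, hc⟩ := exists_ne (0 : C)
        obtain ⟨ℓ, hℓ, -⟩ := hii c hc
        exact hℓ (LinearMap.ext fun b => by rw [Subsingleton.elim b 0]; simp)
      omega
    by_cases hm0 : finrank k C = 0
    · have hsC : Subsingleton C := Module.finrank_zero_iff.mp hm0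
      have hn0' : finrank k B = 0 := by
        by_contra hn
        have : Nontrivial B := Module.finrank_pos_iff.mp (Nat.pos_of_ne_zero hn)
        obtain ⟨b, hb⟩ := exists_ne (0 : B)
        obtain ⟨ℓ, hℓ1⟩ := exists_eval_one (k := k) hb
        have hℓ : ℓ ≠ 0 := by
          intro h; rw [h] at hℓ1; simp at hℓ1
        obtain ⟨c, hc, -⟩ := hi ℓ hℓ
        exact hc (Subsingleton.elim c 0)
      omega
    have hn : 0 < finrank k B := Nat.pos_of_ne_zero hn0
    have hm : 0 < finrank k C := Nat.pos_of_ne_zero hm0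
    -- Case 2 : some evaluation is surjective
    by_cases hC2 : ∃ b : B, b ≠ 0 ∧ M.map (LinearMap.applyₗ (R := k) b) = ⊤
    · obtain ⟨b, hb, htop⟩ := hC2
      set φ := (LinearMap.applyₗ (R := k) b : (B →ₗ[k] C) →ₗ[k] C) with hφ
      have hrn := map_inf_ker_finrank (k := k) φ M
      rw [htop, finrank_top] at hrn
      -- the kernel of evaluation at b inside the dual has dimension n - 1
      obtain ⟨ℓ₁, hℓ₁⟩ := exists_eval_one (k := k) hb
      set ev := (LinearMap.applyₗ (R := k) b : (B →ₗ[k] k) →ₗ[k] k) with hev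
      have hranktop : LinearMap.range ev = ⊤ := by
        rw [LinearMap.range_eq_top]
        intro t
        exact ⟨t • ℓ₁, by simp [hev, hℓ₁]⟩
      have hdual : finrank k (B →ₗ[k] k) = finrank k B := Subspace.dual_finrank_eq
      have hD : finrank k ↥(LinearMap.ker ev) + 1 = finrank k B := by
        have h2 := LinearMap.finrank_range_add_finrank_ker ev
        rw [hranktop, finrank_top, Module.finrank_self, hdual] at h2
        omega
      set D := LinearMap.ker ev with hDdef
      haveI : Module.Free k ↥D := Module.Free.of_divisionRing k ↥D
      let bD := Module.finBasis k ↥D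
      have hℓne : ∀ i, ((bD i : B →ₗ[k] k)) ≠ 0 := by
        intro i h
        exact bD.ne_zero i (by exact_mod_cast Subtype.ext h)
      choose c hc hcM using fun i => hi (bD i : B →ₗ[k] k) (hℓne i)
      have hindD : LinearIndependent k (fun i => ((bD i : B →ₗ[k] k))) :=
        bD.linearIndependent.map_injOn D.subtype (Set.injOn_of_injective D.injective_subtype)
      have hind : LinearIndependent k
          (fun i => ((bD i : B →ₗ[k] k)).smulRight (c i)) :=
        indep_of_indep_left hindD hc
      have hspan : Submodule.span k
          (Set.range (fun i => ((bD i : B →ₗ[k] k)).smulRight (c i))) ≤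
          M ⊓ LinearMap.ker φ := by
        rw [Submodule.span_le]
        rintro - ⟨i, rfl⟩
        refine ⟨hcM i, ?_⟩
        have hz : (bD i : B →ₗ[k] k) b = 0 := (bD i).2
        simp [LinearMap.mem_ker, hφ, hz]
      have hbound : finrank k ↥D ≤ finrank k ↥(M ⊓ LinearMap.ker φ) := by
        have h3 := Submodule.finrank_mono hspan
        rwa [finrank_span_eq_card hind, Fintype.card_fin] at h3
      omega
    -- Case 3 : some covector composition is surjective
    by_cases hC3 : ∃ γ : C →ₗ[k] k, γ ≠ 0 ∧
        M.map ((LinearMap.llcomp k B C k) γ) = ⊤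
    · obtain ⟨γ, hγ, htop⟩ := hC3
      set φ := ((LinearMap.llcomp k B C k) γ : (B →ₗ[k] C) →ₗ[k] (B →ₗ[k] k)) with hφ
      have hdual : finrank k (B →ₗ[k] k) = finrank k B := Subspace.dual_finrank_eq
      have hrn := map_inf_ker_finrank (k := k) φ M
      rw [htop, finrank_top, hdual] at hrn
      -- ker γ has dimension m - 1
      have hranktop : LinearMap.range γ = ⊤ := by
        obtain ⟨c₁, hc₁⟩ := exists_apply_ne_zero hγ
        rw [LinearMap.range_eq_top]
        intro t
        exact ⟨(t / γ c₁) • c₁, by rw [map_smul, smul_eq_mul, div_mul_cancel₀ _ hc₁]⟩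
      have hD : finrank k ↥(LinearMap.ker γ) + 1 = finrank k C := by
        have h2 := LinearMap.finrank_range_add_finrank_ker γ
        rw [hranktop, finrank_top, Module.finrank_self] at h2
        omega
      set D := LinearMap.ker γ with hDdef
      let bD := Module.finBasis k ↥D
      have hcne : ∀ i, ((bD i : C)) ≠ 0 := by
        intro i h
        exact bD.ne_zero i (by exact_mod_cast Subtype.ext h)
      choose ℓ hℓ hℓM using fun i => hii (bD i : C) (hcne i)
      have hindD : LinearIndependent k (fun i => ((bD i : C))) :=
        bD.linearIndependent.map' D.subtype (Submodule.ker_subtype D)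
      have hind : LinearIndependent k
          (fun i => (ℓ i).smulRight ((bD i : C))) :=
        indep_of_indep_right hindD hℓ
      have hspan : Submodule.span k
          (Set.range (fun i => (ℓ i).smulRight ((bD i : C)))) ≤
          M ⊓ LinearMap.ker φ := by
        rw [Submodule.span_le]
        rintro - ⟨i, rfl⟩
        refine ⟨hℓM i, ?_⟩
        have hz : γ (bD i : C) = 0 := (bD i).2
        simp only [LinearMap.mem_ker]
        apply LinearMap.ext fun x => ?_
        simp [hφ, hz]
      have hbound : finrank k ↥D ≤ finrank k ↥(M ⊓ LinearMap.ker φ) := by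
        have h3 := Submodule.finrank_mono hspan
        rwa [finrank_span_eq_card hind, Fintype.card_fin] at h3
      omega
    -- Case A : good line to quotient by
    by_cases hCA : ∃ c₀ : C, c₀ ≠ 0 ∧ ∀ ℓ : B →ₗ[k] k, ℓ ≠ 0 →
        ∃ c : C, c ∉ Submodule.span k {c₀} ∧ ℓ.smulRight c ∈ M
    · obtain ⟨c₀, hc₀, hall⟩ := hCA
      set p := Submodule.span k {c₀} with hp
      set φ := ((LinearMap.llcomp k B C (C ⧸ p)) p.mkQ :
          (B →ₗ[k] C) →ₗ[k] (B →ₗ[k] C ⧸ p)) with hφ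
      set M' := M.map φ with hM'
      have comp_eq : ∀ (ℓ : B →ₗ[k] k) (c : C),
          φ (ℓ.smulRight c) = ℓ.smulRight (Submodule.Quotient.mk (p := p) c) := by
        intro ℓ c; apply LinearMap.ext fun x => ?_
        simp [hφ, Submodule.Quotient.mk_smul]
      have hq : finrank k (C ⧸ p) + 1 = finrank k C := by
        have h1 := Submodule.finrank_quotient_add_finrank p
        have h2 : finrank k ↥p = 1 := by rw [hp]; exact finrank_span_singleton hc₀
        omega
      have hi' : ∀ ℓ : B →ₗ[k] k, ℓ ≠ 0 → ∃ c' : C ⧸ p, c' ≠ 0 ∧ ℓ.smulRight c' ∈ M' := by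
        intro ℓ hℓ
        obtain ⟨c, hcs, hcM⟩ := hall ℓ hℓ
        refine ⟨Submodule.Quotient.mk c, ?_, ?_⟩
        · simpa [Submodule.Quotient.mk_eq_zero] using hcs
        · exact comp_eq ℓ c ▸ Submodule.mem_map_of_mem hcM
      have hii' : ∀ c' : C ⧸ p, c' ≠ 0 → ∃ ℓ : B →ₗ[k] k, ℓ ≠ 0 ∧ ℓ.smulRight c' ∈ M' := by
        intro c' hc'
        obtain ⟨c, rfl⟩ := Submodule.Quotient.mk_surjective p c'
        have hc : c ≠ 0 := by rintro rfl; simp at hc'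
        obtain ⟨ℓ, hℓ, hM⟩ := hii c hc
        exact ⟨ℓ, hℓ, comp_eq ℓ c ▸ Submodule.mem_map_of_mem hM⟩
      have ihM' := ih B (C ⧸ p) M' (by omega) hi' hii'
      have hrn := map_inf_ker_finrank (k := k) φ M
      rw [← hM'] at hrn
      obtain ⟨ℓ₀, hℓ₀, hℓ₀M⟩ := hii c₀ hc₀
      have hker : ℓ₀.smulRight c₀ ∈ M ⊓ LinearMap.ker φ := by
        refine Submodule.mem_inf.mpr ⟨hℓ₀M, ?_⟩
        rw [LinearMap.mem_ker, comp_eq]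
        have hz : Submodule.Quotient.mk (p := p) c₀ = 0 := by
          rw [Submodule.Quotient.mk_eq_zero]
          rw [hp]
          exact Submodule.mem_span_singleton_self c₀
        rw [hz]
        apply LinearMap.ext fun x => ?_
        simp
      have hKpos : 0 < finrank k ↥(M ⊓ LinearMap.ker φ) := by
        rw [Module.finrank_pos_iff]
        refine nontrivial_of_ne (⟨_, hker⟩ : ↥(M ⊓ LinearMap.ker φ)) 0 ?_
        intro h
        rw [Submodule.mk_eq_zero] at h
        exact smulRight_ne_zero hℓ₀ hc₀ h
      omega
    -- Case B : good hyperplane to restrict to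
    by_cases hCB : ∃ ℓ₀ : B →ₗ[k] k, ℓ₀ ≠ 0 ∧ ∀ c : C, c ≠ 0 →
        ∃ ℓ : B →ₗ[k] k, ℓ ∉ Submodule.span k {ℓ₀} ∧ ℓ.smulRight c ∈ M
    · obtain ⟨ℓ₀, hℓ₀, hall⟩ := hCB
      set B₀ := LinearMap.ker ℓ₀ with hB₀def
      set φ := (LinearMap.lcomp k C B₀.subtype :
          (B →ₗ[k] C) →ₗ[k] (↥B₀ →ₗ[k] C)) with hφ
      set M' := M.map φ with hM'
      have comp_eq : ∀ (ℓ : B →ₗ[k] k) (c : C),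
          φ (ℓ.smulRight c) = (ℓ.comp B₀.subtype).smulRight c := by
        intro ℓ c; apply LinearMap.ext fun x => ?_
        simp [hφ]
      have hq : finrank k ↥B₀ + 1 = finrank k B := by
        have hranktop : LinearMap.range ℓ₀ = ⊤ := by
          obtain ⟨b₁, hb₁⟩ := exists_apply_ne_zero hℓ₀
          rw [LinearMap.range_eq_top]
          intro t
          exact ⟨(t / ℓ₀ b₁) • b₁, by rw [map_smul, smul_eq_mul, div_mul_cancel₀ _ hb₁]⟩
        have h2 := LinearMap.finrank_range_add_finrank_ker ℓ₀
        rw [hranktop, finrank_top, Module.finrank_self, ← hB₀def] at h2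
        omega
      have hi' : ∀ ℓ' : ↥B₀ →ₗ[k] k, ℓ' ≠ 0 → ∃ c : C, c ≠ 0 ∧ ℓ'.smulRight c ∈ M' := by
        intro ℓ' hℓ'
        obtain ⟨q, hq'⟩ := Submodule.exists_isCompl B₀
        set pr := B₀.linearProjOfIsCompl q hq' with hpr
        set ℓ := ℓ'.comp pr with hℓdef
        have hrestrict : ℓ.comp B₀.subtype = ℓ' := by
          apply LinearMap.ext fun x => ?_
          simp [hℓdef, hpr]
          exact congrArg ℓ' (Submodule.projectionOnto_apply_left hq' x)
        have hℓ : ℓ ≠ 0 := by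
          obtain ⟨x, hx⟩ := exists_apply_ne_zero hℓ'
          intro h
          apply hx
          have : ℓ (B₀.subtype x) = 0 := by rw [h]; simp
          rwa [← LinearMap.comp_apply, hrestrict] at this
        obtain ⟨c, hc, hcM⟩ := hi ℓ hℓ
        refine ⟨c, hc, ?_⟩
        have := comp_eq ℓ c
        rw [hrestrict] at this
        exact this ▸ Submodule.mem_map_of_mem hcM
      have hii' : ∀ c : C, c ≠ 0 → ∃ ℓ' : ↥B₀ →ₗ[k] k, ℓ' ≠ 0 ∧ ℓ'.smulRight c ∈ M' := by
        intro c hc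
        obtain ⟨ℓ, hℓs, hℓM⟩ := hall c hc
        refine ⟨ℓ.comp B₀.subtype, ?_, comp_eq ℓ c ▸ Submodule.mem_map_of_mem hℓM⟩
        intro h
        apply hℓs
        have hker : ∀ x, ℓ₀ x = 0 → ℓ x = 0 := by
          intro x hx
          have : ℓ.comp B₀.subtype ⟨x, hx⟩ = 0 := by rw [h]; simp
          simpa using this
        obtain ⟨t, ht⟩ := eq_smul_of_forall_ker hℓ₀ hker
        rw [Submodule.mem_span_singleton]
        exact ⟨t, ht.symm⟩
      have ihM' := ih ↥B₀ C M' (by omega) hi' hii'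
      have hrn := map_inf_ker_finrank (k := k) φ M
      rw [← hM'] at hrn
      obtain ⟨c, hc, hcM⟩ := hi ℓ₀ hℓ₀
      have hker : ℓ₀.smulRight c ∈ M ⊓ LinearMap.ker φ := by
        refine Submodule.mem_inf.mpr ⟨hcM, ?_⟩
        rw [LinearMap.mem_ker, comp_eq]
        have hz : ℓ₀.comp B₀.subtype = 0 := by
          apply LinearMap.ext fun x => ?_
          simpa using x.2
        rw [hz]
        apply LinearMap.ext fun x => ?_
        simp
      have hKpos : 0 < finrank k ↥(M ⊓ LinearMap.ker φ) := by
        rw [Module.finrank_pos_iff]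
        refine nontrivial_of_ne (⟨_, hker⟩ : ↥(M ⊓ LinearMap.ker φ)) 0 ?_
        intro h
        rw [Submodule.mk_eq_zero] at h
        exact smulRight_ne_zero hℓ₀ hc h
      omega
    -- hard case
    exfalso
    push_neg at hC2 hC3 hCA hCB
    cases finite_or_infinite k with
    | inl hfin =>
      haveI : Finite B := finite_of_findim_of_finite (k := k)
      haveI : Finite C := finite_of_findim_of_finite (k := k)
      haveI : Finite (B →ₗ[k] k) := Finite.of_injective _ (DFunLike.coe_injective (F := B →ₗ[k] k))
      haveI : Finite (B →ₗ[k] C) := Finite.of_injective _ (DFunLike.coe_injective (F := B →ₗ[k] C))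
      have hq2 : 1 < Nat.card k := Finite.one_lt_card_iff_nontrivial.mpr inferInstance
      have hdual : finrank k (B →ₗ[k] k) = finrank k B := Subspace.dual_finrank_eq
      -- strengthened forms of the negated case hypotheses
      have H2 : ∀ ℓ : B →ₗ[k] k, ℓ ≠ 0 → ∃ c : C, c ≠ 0 ∧ ℓ.smulRight c ∈ M ∧
          ∀ ℓ' : B →ₗ[k] k, ℓ'.smulRight c ∈ M → ℓ' ∈ Submodule.span k {ℓ} := by
        intro ℓ hℓ
        obtain ⟨c, hc, hP⟩ := hCB ℓ hℓ
        have hP' : ∀ ℓ' : B →ₗ[k] k, ℓ'.smulRight c ∈ M → ℓ' ∈ Submodule.span k {ℓ} := by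
          intro ℓ' hmem
          by_contra hs
          exact hP ℓ' hs hmem
        refine ⟨c, hc, ?_, hP'⟩
        obtain ⟨ℓ', hℓ', hℓ'M⟩ := hii c hc
        obtain ⟨t, ht⟩ := Submodule.mem_span_singleton.mp (hP' ℓ' hℓ'M)
        have htne : t ≠ 0 := by rintro rfl; rw [← ht] at hℓ'; simp at hℓ'
        have heq : ℓ.smulRight c = t⁻¹ • (ℓ'.smulRight c) := by
          rw [← ht, smulRight_smul_left, smul_smul, inv_mul_cancel₀ htne, one_smul]
        rw [heq]
        exact Submodule.smul_mem M _ hℓ'M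
      have H1 : ∀ c : C, c ≠ 0 → ∃ ℓ : B →ₗ[k] k, ℓ ≠ 0 ∧ ℓ.smulRight c ∈ M ∧
          ∀ c' : C, ℓ.smulRight c' ∈ M → c' ∈ Submodule.span k {c} := by
        intro c hc
        obtain ⟨ℓ, hℓ, hP⟩ := hCA c hc
        have hP' : ∀ c' : C, ℓ.smulRight c' ∈ M → c' ∈ Submodule.span k {c} := by
          intro c' hmem
          by_contra hs
          exact hP c' hs hmem
        refine ⟨ℓ, hℓ, ?_, hP'⟩
        obtain ⟨c', hc', hc'M⟩ := hi ℓ hℓ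
        obtain ⟨t, ht⟩ := Submodule.mem_span_singleton.mp (hP' c' hc'M)
        have htne : t ≠ 0 := by rintro rfl; rw [← ht] at hc'; simp at hc'
        have heq : ℓ.smulRight c = t⁻¹ • (ℓ.smulRight c') := by
          rw [← ht, smulRight_smul_right, smul_smul, inv_mul_cancel₀ htne, one_smul]
        rw [heq]
        exact Submodule.smul_mem M _ hc'M
      choose cF hcF1 hcF2 hcF3 using H2
      choose ℓF hlF1 hlF2 hlF3 using H1
      -- side 1: injection from an affine chart of the dual of B into M(b)
      have hNB : Nontrivial B := Module.finrank_pos_iff.mp hn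
      have hNC : Nontrivial C := Module.finrank_pos_iff.mp hm
      obtain ⟨b, hb⟩ := exists_ne (0 : B)
      obtain ⟨ℓ₁, hℓ₁⟩ := exists_eval_one (k := k) hb
      obtain ⟨c₁, hc₁⟩ := exists_ne (0 : C)
      obtain ⟨γ, hγ1⟩ := exists_eval_one (k := k) hc₁
      have hγ : γ ≠ 0 := by intro h; rw [h] at hγ1; simp at hγ1
      set Mb := M.map (LinearMap.applyₗ (R := k) b) with hMbdef
      have hMblt : finrank k ↥Mb < finrank k C :=
        Submodule.finrank_lt (hC2 b hb)
      have hsne : ∀ ℓs : {ℓ : B →ₗ[k] k // ℓ b = 1}, ℓs.1 ≠ 0 := by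
        intro ℓs h
        have h2 := ℓs.2
        rw [h] at h2
        simp at h2
      set F : Option {ℓ : B →ₗ[k] k // ℓ b = 1} → ↥Mb := fun o =>
        Option.rec 0 (fun ℓs => ⟨cF ℓs.1 (hsne ℓs), by
          exact ⟨ℓs.1.smulRight (cF ℓs.1 (hsne ℓs)), hcF2 _ _, by simp [ℓs.2]⟩⟩) o
        with hF
      have hFinj : Function.Injective F := by
        intro o1 o2 h
        match o1, o2 with
        | none, none => rfl
        | some ℓ1, none =>
          exfalso
          have hval := Subtype.ext_iff.mp h
          exact hcF1 ℓ1.1 (hsne ℓ1) hval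
        | none, some ℓ2 =>
          exfalso
          have hval := Subtype.ext_iff.mp h
          exact hcF1 ℓ2.1 (hsne ℓ2) hval.symm
        | some ℓ1, some ℓ2 =>
          have hval : cF ℓ1.1 (hsne ℓ1) = cF ℓ2.1 (hsne ℓ2) := Subtype.ext_iff.mp h
          have hm2 : ℓ2.1.smulRight (cF ℓ1.1 (hsne ℓ1)) ∈ M := by
            rw [hval]; exact hcF2 _ _
          obtain ⟨t, ht⟩ := Submodule.mem_span_singleton.mp (hcF3 ℓ1.1 (hsne ℓ1) ℓ2.1 hm2)
          have ht1 : t = 1 := by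
            have h3 := DFunLike.congr_fun ht b
            simp only [LinearMap.smul_apply, ℓ1.2, ℓ2.2, smul_eq_mul, mul_one] at h3
            exact h3
          rw [ht1, one_smul] at ht
          congr 1
          exact Subtype.ext ht
      have hcard1 := Nat.card_le_card_of_injective F hFinj
      have cardX : Nat.card {ℓ : B →ₗ[k] k // ℓ b = 1}
          = Nat.card k ^ (finrank k (B →ₗ[k] k) - 1) := by
        exact card_level_set (k := k) (LinearMap.applyₗ (R := k) b) (w₀ := ℓ₁)
          (by simp [hℓ₁])
      rw [Finite.card_option, cardX, nat_card_eq_pow (k := k) (V := ↥Mb), hdual] at hcard1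
      have hlt1 : Nat.card k ^ (finrank k B - 1) < Nat.card k ^ (finrank k C - 1) := by
        calc Nat.card k ^ (finrank k B - 1) < Nat.card k ^ finrank k ↥Mb := by omega
          _ ≤ Nat.card k ^ (finrank k C - 1) :=
            Nat.pow_le_pow_right (by omega) (by omega)
      -- side 2: injection from an affine chart of C into M_γ
      set Mγ := M.map ((LinearMap.llcomp k B C k) γ) with hMγdef
      have hMγlt : finrank k ↥Mγ < finrank k B := by
        have h4 := Submodule.finrank_lt (hC3 γ hγ)
        rwa [hdual] at h4
      have hsne' : ∀ cs : {c : C // γ c = 1}, cs.1 ≠ 0 := by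
        intro cs h
        have h2 := cs.2
        rw [h] at h2
        simp at h2
      set G : Option {c : C // γ c = 1} → ↥Mγ := fun o =>
        Option.rec 0 (fun cs => ⟨ℓF cs.1 (hsne' cs), by
          refine ⟨(ℓF cs.1 (hsne' cs)).smulRight cs.1, hlF2 _ _, ?_⟩
          apply LinearMap.ext fun x => ?_
          simp [cs.2]⟩) o
        with hG
      have hGinj : Function.Injective G := by
        intro o1 o2 h
        match o1, o2 with
        | none, none => rfl
        | some c1, none =>
          exfalso
          have hval := Subtype.ext_iff.mp h
          exact hlF1 c1.1 (hsne' c1) hval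
        | none, some c2 =>
          exfalso
          have hval := Subtype.ext_iff.mp h
          exact hlF1 c2.1 (hsne' c2) hval.symm
        | some c1, some c2 =>
          have hval : ℓF c1.1 (hsne' c1) = ℓF c2.1 (hsne' c2) := Subtype.ext_iff.mp h
          have hm2 : (ℓF c1.1 (hsne' c1)).smulRight c2.1 ∈ M := by
            rw [hval]; exact hlF2 _ _
          obtain ⟨t, ht⟩ := Submodule.mem_span_singleton.mp (hlF3 c1.1 (hsne' c1) c2.1 hm2)
          have ht1 : t = 1 := by
            have h3 := congrArg γ ht
            simp only [map_smul, c1.2, c2.2, smul_eq_mul, mul_one] at h3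
            exact h3
          rw [ht1, one_smul] at ht
          congr 1
          exact Subtype.ext ht
      have hcard2 := Nat.card_le_card_of_injective G hGinj
      have cardX' := card_level_set (k := k) γ (w₀ := c₁) hγ1
      rw [Finite.card_option, cardX', nat_card_eq_pow (k := k) (V := ↥Mγ)] at hcard2
      have hlt2 : Nat.card k ^ (finrank k C - 1) < Nat.card k ^ (finrank k B - 1) := by
        calc Nat.card k ^ (finrank k C - 1) < Nat.card k ^ finrank k ↥Mγ := by omega
          _ ≤ Nat.card k ^ (finrank k B - 1) :=
            Nat.pow_le_pow_right (by omega) (by omega)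
      omega
    | inr hinf =>
      -- infinite field : C is covered by the finitely many proper subspaces M(bᵢ)
      let bb := Module.finBasis k B
      have hcover : (⋃ i, ((M.map (LinearMap.applyₗ (R := k) (bb i)) :
          Submodule k C) : Set C)) = Set.univ := by
        rw [Set.eq_univ_iff_forall]
        intro c
        rcases eq_or_ne c 0 with rfl | hc
        · exact Set.mem_iUnion.2 ⟨⟨0, hn⟩, (M.map _).zero_mem⟩
        · obtain ⟨ℓ, hℓ, hM⟩ := hii c hc
          have : ∃ i, ℓ (bb i) ≠ 0 := by
            by_contra h
            push_neg at h
            exact hℓ (bb.ext fun i => by simp [h i])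
          obtain ⟨i, hbi⟩ := this
          refine Set.mem_iUnion.2 ⟨i, ?_⟩
          have hmem : ℓ (bb i) • c ∈ M.map (LinearMap.applyₗ (R := k) (bb i)) :=
            ⟨ℓ.smulRight c, hM, by simp⟩
          have h2 := Submodule.smul_mem _ (ℓ (bb i))⁻¹ hmem
          rwa [smul_smul, inv_mul_cancel₀ hbi, one_smul] at h2
      obtain ⟨i, hitop⟩ := Subspace.exists_eq_top_of_iUnion_eq_univ hcover
      exact hC2 (bb i) (bb.ne_zero i) hitop

end key

/-- **Corollary 2.2.** For a bilinear map `f : A × B → C` on finite-dimensional vector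
spaces such that every nonzero `a` acts nontrivially, but this fails on restriction to
every proper subspace of `B` and on composition with every proper quotient of `C`,
one has `dim A ≥ dim B + dim C - 1`. -/
theorem stmt1 (k A B C : Type*) [Field k]
    [AddCommGroup A] [Module k A] [AddCommGroup B] [Module k B]
    [AddCommGroup C] [Module k C]
    [FiniteDimensional k A] [FiniteDimensional k B] [FiniteDimensional k C]
    (f : A →ₗ[k] B →ₗ[k] C)
    (h0 : ∀ a : A, a ≠ 0 → f a ≠ 0)
    (hB : ∀ B₀ : Submodule k B, B₀ ≠ ⊤ → ∃ a : A, a ≠ 0 ∧ ∀ b ∈ B₀, f a b = 0)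
    (hC : ∀ C₀ : Submodule k C, C₀ ≠ ⊥ → ∃ a : A, a ≠ 0 ∧ ∀ b : B, f a b ∈ C₀) :
    finrank k B + finrank k C - 1 ≤ finrank k A := by
  classical
  set M := LinearMap.range f with hM
  have hfr : finrank k ↥M ≤ finrank k A := LinearMap.finrank_range_le f
  have hi : ∀ ℓ : B →ₗ[k] k, ℓ ≠ 0 → ∃ c : C, c ≠ 0 ∧ ℓ.smulRight c ∈ M := by
    intro ℓ hℓ
    have hker : LinearMap.ker ℓ ≠ ⊤ := fun h => hℓ (LinearMap.ker_eq_top.mp h)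
    obtain ⟨a, ha, hva⟩ := hB (LinearMap.ker ℓ) hker
    obtain ⟨b₁, hb₁⟩ := exists_apply_ne_zero hℓ
    set b₀ := (ℓ b₁)⁻¹ • b₁ with hb₀
    have hℓb₀ : ℓ b₀ = 1 := by
      rw [hb₀, map_smul, smul_eq_mul, inv_mul_cancel₀ hb₁]
    set c := f a b₀ with hc
    have hfa : f a = ℓ.smulRight c := by
      apply LinearMap.ext fun x => ?_
      have hxker : x - ℓ x • b₀ ∈ LinearMap.ker ℓ := by
        simp [LinearMap.mem_ker, hℓb₀]
      have h1 := hva _ hxker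
      rw [map_sub, map_smul, sub_eq_zero] at h1
      simpa [hc] using h1
    have hcne : c ≠ 0 := by
      intro h
      apply h0 a ha
      rw [hfa, h]
      apply LinearMap.ext fun x => ?_
      simp
    exact ⟨c, hcne, by rw [← hfa]; exact LinearMap.mem_range_self f a⟩
  have hii : ∀ c : C, c ≠ 0 → ∃ ℓ : B →ₗ[k] k, ℓ ≠ 0 ∧ ℓ.smulRight c ∈ M := by
    intro c hc
    have hsp : Submodule.span k {c} ≠ ⊥ := by
      simpa [Submodule.span_singleton_eq_bot] using hc
    obtain ⟨a, ha, hva⟩ := hC (Submodule.span k {c}) hsp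
    obtain ⟨γ, hγ⟩ := exists_eval_one (k := k) hc
    set ℓ := γ.comp (f a) with hℓdef
    have hfa : f a = ℓ.smulRight c := by
      apply LinearMap.ext fun x => ?_
      obtain ⟨t, ht⟩ := Submodule.mem_span_singleton.mp (hva x)
      have hγt : γ (f a x) = t := by rw [← ht]; simp [hγ]
      simp only [hℓdef, LinearMap.smulRight_apply, LinearMap.comp_apply, hγt, ht]
    have hℓne : ℓ ≠ 0 := by
      intro h
      apply h0 a ha
      rw [hfa, h]
      apply LinearMap.ext fun x => ?_
      simp
    exact ⟨ℓ, hℓne, by rw [← hfa]; exact LinearMap.mem_range_self f a⟩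
  have hkey := key (finrank k B + finrank k C) B C M le_rfl hi hii
  omega
end

section
/- If R is a left Artinian local ring with soc(R) central in R, then the residue division ring R/J(R) is commutative, i.e., a field. -/
/-- If `R` is a left Artinian local ring whose (two-sided) socle is central, then the
residue division ring `R/J(R)` is commutative; equivalently, all additive commutators
`a*b - b*a` lie in the Jacobson radical. -/
theorem stmt3 (R : Type*) [Ring R] [IsArtinianRing R] [IsLocalRing R]
    (hcentral : ∀ a ∈ sSup {I : TwoSidedIdeal R | IsAtom I}, ∀ r : R, a * r = r * a) :
    ∀ a b : R, a * b - b * a ∈ (Ideal.jacobson ⊥ : Ideal R) := by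
  -- transfer well-foundedness from left ideals to two-sided ideals
  have hsm : StrictMono (TwoSidedIdeal.asIdeal (R := R)) := by
    have hinj : Function.Injective (TwoSidedIdeal.asIdeal (R := R)) := by
      intro I J h
      apply SetLike.coe_injective
      have : (TwoSidedIdeal.asIdeal I : Set R) = (TwoSidedIdeal.asIdeal J : Set R) := by rw [h]
      rwa [TwoSidedIdeal.coe_asIdeal, TwoSidedIdeal.coe_asIdeal] at this
    exact fun I J hIJ => lt_of_le_of_ne (TwoSidedIdeal.asIdeal.monotone hIJ.le)
      (fun h => hIJ.ne (hinj h))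
  have hwfI : WellFounded ((· < ·) : Ideal R → Ideal R → Prop) := wellFounded_lt
  have hwf : WellFounded ((· < ·) : TwoSidedIdeal R → TwoSidedIdeal R → Prop) :=
    Subrelation.wf (fun h => hsm h) (InvImage.wf _ hwfI)
  have hatomic : IsAtomic (TwoSidedIdeal R) := isAtomic_of_orderBot_wellFounded_lt hwf
  -- obtain an atom
  have htop : (⊤ : TwoSidedIdeal R) ≠ ⊥ := by
    intro h
    have : (1 : R) ∈ (⊥ : TwoSidedIdeal R) := h ▸ TwoSidedIdeal.mem_top (R := R)
    exact one_ne_zero ((TwoSidedIdeal.mem_bot (R := R)).mp this)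
  obtain ⟨I, hI, -⟩ := (hatomic.eq_bot_or_exists_atom_le ⊤).resolve_left htop
  -- pick a nonzero element of the atom
  have hIbot : I ≠ ⊥ := hI.1
  obtain ⟨s, hsI, hs0⟩ : ∃ s : R, s ∈ I ∧ s ≠ 0 := by
    by_contra h
    push_neg at h
    exact hIbot (by
      apply SetLike.coe_injective
      apply Set.eq_of_subset_of_subset
      · intro x hx
        simp only [SetLike.mem_coe] at hx
        simp [(TwoSidedIdeal.mem_bot (R := R)), h x hx]
      · intro x hx
        simp only [SetLike.mem_coe, TwoSidedIdeal.mem_bot] at hx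
        simp [hx, TwoSidedIdeal.zero_mem])
  have hIle : I ≤ sSup {I : TwoSidedIdeal R | IsAtom I} := le_sSup hI
  -- every element of I is central
  have hcen : ∀ x ∈ I, ∀ r : R, x * r = r * x := fun x hx => hcentral x (hIle hx)
  -- the left annihilator of s contains all commutators
  intro a b
  have key : s * (a * b - b * a) = 0 := by
    have hsa : ∀ r : R, (s * a) * r = r * (s * a) :=
      hcen (s * a) (I.mul_mem_right _ _ hsI)
    have hsb : s * b = b * s := hcen s hsI b
    calc s * (a * b - b * a) = (s * a) * b - (s * b) * a := by noncomm_ring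
      _ = b * (s * a) - (s * b) * a := by rw [hsa b]
      _ = b * (s * a) - (b * s) * a := by rw [hsb]
      _ = 0 := by noncomm_ring
  -- elements annihilated by s are nonunits, in fact lie in every maximal left ideal
  have hann_nonunit : ∀ y : R, s * y = 0 → ¬ IsUnit y := by
    intro y hy hu
    obtain ⟨u, rfl⟩ := hu
    apply hs0
    calc (s : R) = s * (u * u⁻¹) := by simp
      _ = (s * u) * (u⁻¹ : Rˣ) := by rw [mul_assoc]
      _ = 0 := by rw [hy, zero_mul]
  rw [Ideal.jacobson, Ideal.mem_sInf]
  rintro M ⟨-, hM⟩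
  by_contra hxM
  -- M ⊔ span {a*b-b*a} = ⊤ by maximality
  have hlt : M < M ⊔ Ideal.span {a * b - b * a} := by
    refine lt_of_le_of_ne le_sup_left (fun h => hxM ?_)
    have : a * b - b * a ∈ M ⊔ Ideal.span {a * b - b * a} :=
      Submodule.mem_sup_right (Ideal.subset_span (Set.mem_singleton _))
    rwa [← h] at this
  have hsup : M ⊔ Ideal.span {a * b - b * a} = ⊤ := hM.1.2 _ hlt
  have hone : (1 : R) ∈ M ⊔ Ideal.span {a * b - b * a} := hsup ▸ Submodule.mem_top
  obtain ⟨m, hm, z, hz, hmz⟩ := Submodule.mem_sup.mp hone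
  obtain ⟨r, rfl⟩ := Submodule.mem_span_singleton.mp hz
  -- r • (a*b - b*a) is annihilated by s, hence a nonunit
  have hz0 : s * (r • (a * b - b * a)) = 0 := by
    have hsr : s * r = r * s := hcen s hsI r
    calc s * (r • (a * b - b * a)) = (s * r) * (a * b - b * a) := by
          rw [smul_eq_mul, mul_assoc]
      _ = r * (s * (a * b - b * a)) := by rw [hsr, mul_assoc]
      _ = 0 := by rw [key, mul_zero]
  have hnu1 : ¬ IsUnit (r • (a * b - b * a)) := hann_nonunit _ hz0
  have hnum : ¬ IsUnit m := fun hu => hM.ne_top (M.eq_top_of_isUnit_mem hm hu)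
  rcases IsLocalRing.isUnit_or_isUnit_of_add_one hmz with h | h
  · exact hnum h
  · exact hnu1 h
end

section
/- Let D be a division ring and Y a left D-vector space. If Y₁, …, Y_n are proper subspaces of Y with n ≤ card(D), then Y ≠ Y₁ ∪ … ∪ Y_n. -/
/-- Avoidance lemma: there is a vector outside all `n ≤ card D` proper subspaces. -/
theorem avoid_aux (D Y : Type*) [DivisionRing D] [AddCommGroup Y] [Module D Y] :
    ∀ (n : ℕ) (Ys : Fin n → Submodule D Y), (∀ i, Ys i ≠ ⊤) →
      (n : Cardinal) ≤ Cardinal.mk D → ∃ x : Y, ∀ i, x ∉ Ys i := by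
  intro n
  induction n with
  | zero => intro Ys _ _; exact ⟨0, fun i => i.elim0⟩
  | succ n ih =>
    intro Ys hprop hcard
    have hn : (n : Cardinal) ≤ Cardinal.mk D := by
      refine le_trans ?_ hcard
      exact_mod_cast Nat.cast_le.mpr (Nat.le_succ n)
    obtain ⟨y, hy⟩ := ih (fun i => Ys i.castSucc) (fun i => hprop _) hn
    -- pick x outside the last subspace
    obtain ⟨x, hx⟩ : ∃ x, x ∉ Ys (Fin.last n) := by
      by_contra h
      push_neg at h
      exact hprop (Fin.last n) (Submodule.eq_top_iff'.mpr h)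
    by_cases hyl : y ∈ Ys (Fin.last n)
    · -- consider the family x + c • y
      have hnlt : (n : Cardinal) < Cardinal.mk D := by
        refine lt_of_lt_of_le ?_ hcard
        exact_mod_cast Nat.lt_succ_self n
      set B : Set D := {c | ∃ i : Fin n, x + c • y ∈ Ys i.castSucc} with hB
      have hinj : ∀ c ∈ B, ∀ c' ∈ B, ∀ i : Fin n,
          x + c • y ∈ Ys i.castSucc → x + c' • y ∈ Ys i.castSucc → c = c' := by
        intro c _ c' _ i h1 h2
        by_contra hne
        have : (c - c') • y ∈ Ys i.castSucc := by
          have := (Ys i.castSucc).sub_mem h1 h2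
          simpa [sub_smul] using this
        have : y ∈ Ys i.castSucc := by
          have := (Ys i.castSucc).smul_mem (c - c')⁻¹ this
          rwa [← mul_smul, inv_mul_cancel₀ (sub_ne_zero.mpr hne), one_smul] at this
        exact hy i this
      have hBcard : Cardinal.mk B ≤ (n : Cardinal) := by
        classical
        have : ∃ f : B → Fin n, ∀ c : B, x + (c : D) • y ∈ Ys (f c).castSucc := by
          exact ⟨fun c => c.2.choose, fun c => c.2.choose_spec⟩
        obtain ⟨f, hf⟩ := this
        have hfinj : Function.Injective f := by
          intro c c' hcc
          ext
          exact hinj c c.2 c' c'.2 (f c) (hf c) (hcc ▸ hf c')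
        have h2 : Function.Injective (fun c : B => (ULift.up (f c) : ULift.{u_1} (Fin n))) := by
          intro a b h
          exact hfinj (congrArg ULift.down h)
        have := Cardinal.mk_le_of_injective h2
        simpa [Cardinal.mk_fin] using this
      have hBne : B ≠ Set.univ := by
        intro h
        have : Cardinal.mk D ≤ (n : Cardinal) := by
          rw [← Cardinal.mk_univ (α := D), ← h]; exact hBcard
        exact absurd (this.trans_lt hnlt) (lt_irrefl _)
      obtain ⟨c, hc⟩ := Set.ne_univ_iff_exists_notMem B |>.mp hBne
      refine ⟨x + c • y, fun i => ?_⟩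
      induction i using Fin.lastCases with
      | last =>
        intro hmem
        have : x ∈ Ys (Fin.last n) := by
          have := (Ys (Fin.last n)).sub_mem hmem ((Ys (Fin.last n)).smul_mem c hyl)
          simpa using this
        exact hx this
      | cast j =>
        intro hmem
        exact hc ⟨j, hmem⟩
    · refine ⟨y, fun i => ?_⟩
      induction i using Fin.lastCases with
      | last => exact hyl
      | cast j => exact hy j

/-- **Lemma 3.5, first part.** A vector space over a division ring `D` is not the union
of `n ≤ card D` proper subspaces. -/
theorem stmt4 (D Y : Type*) [DivisionRing D] [AddCommGroup Y] [Module D Y]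
    (n : ℕ) (Ys : Fin n → Submodule D Y) (hprop : ∀ i, Ys i ≠ ⊤)
    (hcard : (n : Cardinal) ≤ Cardinal.mk D) :
    (Set.univ : Set Y) ≠ ⋃ i, (Ys i : Set Y) := by
  obtain ⟨x, hx⟩ := avoid_aux D Y n Ys hprop hcard
  intro h
  have : x ∈ ⋃ i, (Ys i : Set Y) := h ▸ Set.mem_univ x
  obtain ⟨i, hi⟩ := Set.mem_iUnion.mp this
  exact hx i hi
end

section
/- Let D be a division ring and Y a finite-dimensional left D-vector space. There is no finite family Y₁, …, Y_n of nonzero subspaces of Y with n ≤ card(D) such that every maximal (codimension-one) subspace of Y contains some Y_i. -/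
open Cardinal

/-- A nonzero vector admits a functional sending it to 1 (over a division ring). -/
lemma exists_dual_one {D Y : Type*} [DivisionRing D] [AddCommGroup Y] [Module D Y]
    {y : Y} (hy : y ≠ 0) : ∃ f : Y →ₗ[D] D, f y = 1 := by
  obtain ⟨q, hq⟩ := (Submodule.span D {y}).exists_isCompl
  refine ⟨((LinearEquiv.toSpanNonzeroSingleton D Y y hy).symm :
      (Submodule.span D {y}) →ₗ[D] D).comp (Submodule.linearProjOfIsCompl _ q hq), ?_⟩
  have h1 : (Submodule.linearProjOfIsCompl _ q hq) y
      = ⟨y, Submodule.mem_span_singleton_self y⟩ := by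
    exact Submodule.linearProjOfIsCompl_apply_left hq ⟨y, Submodule.mem_span_singleton_self y⟩
  simp only [LinearMap.comp_apply, h1]
  rw [← LinearEquiv.toSpanNonzeroSingleton_one D Y y hy]
  exact LinearEquiv.symm_apply_apply _ _

/-- A vector space over a division ring `R` is not covered by `n ≤ #R` proper subspaces. -/
lemma cover_aux {R V : Type*} [DivisionRing R] [AddCommGroup V] [Module R V] :
    ∀ (n : ℕ) (p : Fin n → Submodule R V), (∀ i, p i ≠ ⊤) →
      ((n : Cardinal) ≤ Cardinal.mk R) → ¬ (∀ v : V, ∃ i, v ∈ p i) := by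
  intro n
  induction n with
  | zero =>
    intro p _ _ h
    obtain ⟨i, _⟩ := h 0
    exact i.elim0
  | succ n ih =>
    intro p hp hn hcov
    by_cases hA : ∀ x ∈ p 0, ∃ i : Fin n, x ∈ p i.succ
    · refine ih (fun i => p i.succ) (fun i => hp i.succ)
        (le_trans (by exact_mod_cast Nat.cast_le.mpr (Nat.le_succ n)) hn) ?_
      intro v
      obtain ⟨i, hi⟩ := hcov v
      cases i using Fin.cases with
      | zero => exact hA v hi
      | succ j => exact ⟨j, hi⟩
    · push_neg at hA
      obtain ⟨x, hx0, hx⟩ := hA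
      rcases Nat.eq_zero_or_pos n with rfl | hn1
      · apply hp 0
        rw [Submodule.eq_top_iff']
        intro v
        obtain ⟨i, hi⟩ := hcov v
        rwa [Fin.eq_zero i] at hi
      · have hxne : x ≠ 0 := by
          intro h
          exact hx ⟨0, hn1⟩ (h ▸ (p _).zero_mem)
        obtain ⟨w, hw⟩ : ∃ w, w ∉ p 0 := by
          by_contra h
          push_neg at h
          exact hp 0 (Submodule.eq_top_iff'.mpr h)
        set φ : Option R → V := fun a => Option.rec x (fun t => w + t • x) a with hφ
        have hsmul : ∀ t : R, t • x ∈ p 0 := fun t => (p 0).smul_mem t hx0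
        have key : ∀ (i : Fin (n+1)) (a b : Option R),
            φ a ∈ p i → φ b ∈ p i → a = b := by
          intro i a b ha hb
          have xmem : ∀ t : R, w + t • x ∈ p i → x ∈ p i → False := by
            intro t hwt hxi
            rcases Fin.eq_zero_or_eq_succ i with rfl | ⟨j, rfl⟩
            · exact hw (by simpa using (p 0).sub_mem hwt ((p 0).smul_mem t hxi))
            · exact hx j hxi
          have two : ∀ t₁ t₂ : R, w + t₁ • x ∈ p i → w + t₂ • x ∈ p i → t₁ = t₂ := by
            intro t₁ t₂ h1 h2
            by_contra hne
            have hsub : (t₁ - t₂) • x ∈ p i := by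
              have := (p i).sub_mem h1 h2
              simpa [sub_smul] using this
            have hxi : x ∈ p i := by
              have := (p i).smul_mem (t₁ - t₂)⁻¹ hsub
              rwa [smul_smul, inv_mul_cancel₀ (sub_ne_zero.mpr hne), one_smul] at this
            exact xmem t₁ h1 hxi
          match a, b with
          | none, none => rfl
          | none, some t => exact (xmem t hb ha).elim
          | some t, none => exact (xmem t ha hb).elim
          | some t₁, some t₂ => exact congrArg some (two t₁ t₂ ha hb)
        choose ψ hψ using fun a => hcov (φ a)
        have hψinj : Function.Injective ψ := by
          intro a b hab
          exact key (ψ a) a b (hψ a) (hab ▸ hψ b)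
        haveI : Finite (Option R) := Finite.of_injective ψ hψinj
        haveI : Finite R := Finite.of_injective (some : R → Option R) (Option.some_injective R)
        haveI := Fintype.ofFinite R
        have h1 : Fintype.card (Option R) ≤ Fintype.card (Fin (n+1)) :=
          Fintype.card_le_of_injective ψ hψinj
        rw [Fintype.card_option, Fintype.card_fin] at h1
        have h2 : n + 1 ≤ Fintype.card R := by
          rw [Cardinal.mk_fintype] at hn
          exact_mod_cast hn
        omega

/-- Evaluation at a point as a `Dᵐᵒᵖ`-linear map on the dual. -/
def evalAt (D Y : Type*) [DivisionRing D] [AddCommGroup Y] [Module D Y] (y : Y) :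
    (Y →ₗ[D] D) →ₗ[Dᵐᵒᵖ] D where
  toFun f := f y
  map_add' f g := rfl
  map_smul' c f := rfl

/-- **Lemma 3.5, second part.** For a nonzero finite-dimensional vector space `Y` over a
division ring `D`, there is no family of `n ≤ card D` nonzero subspaces such that every
maximal (codimension-one) subspace of `Y` contains one of them. -/
theorem stmt5 (D Y : Type*) [DivisionRing D] [AddCommGroup Y] [Module D Y]
    [FiniteDimensional D Y] [Nontrivial Y] :
    ¬ ∃ (n : ℕ) (Ys : Fin n → Submodule D Y),
        (∀ i, Ys i ≠ ⊥) ∧ (n : Cardinal) ≤ Cardinal.mk D ∧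
        ∀ W : Submodule D Y, IsCoatom W → ∃ i, Ys i ≤ W := by
  haveI : IsSimpleModule D D :=
    isSimpleModule_self_iff_isUnit.mpr ⟨inferInstance, fun x hx => isUnit_iff_ne_zero.mpr hx⟩
  rintro ⟨n, Ys, hne, hcard, hcov⟩
  -- pick a nonzero vector in each subspace
  have hych : ∀ i, ∃ y : Y, y ∈ Ys i ∧ y ≠ 0 := by
    intro i
    obtain ⟨y, hy, hy0⟩ := (Ys i).exists_mem_ne_zero_of_ne_bot (hne i)
    exact ⟨y, hy, hy0⟩
  choose y hymem hyne using hych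
  -- a coatom is the kernel of a surjective functional
  have coatom_ker : ∀ f : Y →ₗ[D] D, f ≠ 0 → IsCoatom (LinearMap.ker f) := by
    intro f hf
    apply LinearMap.isCoatom_ker_of_surjective
    obtain ⟨v, hv⟩ : ∃ v, f v ≠ 0 := by
      by_contra h
      push_neg at h
      exact hf (LinearMap.ext fun v => h v)
    intro c
    exact ⟨(c * (f v)⁻¹) • v, by rw [map_smul, smul_eq_mul, mul_assoc,
      inv_mul_cancel₀ hv, mul_one]⟩
  rcases Nat.eq_zero_or_pos n with rfl | hn1
  · -- no subspaces at all: but a coatom exists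
    obtain ⟨y0, hy0⟩ := exists_ne (0 : Y)
    obtain ⟨f, hf⟩ := exists_dual_one (D := D) hy0
    have hfne : f ≠ 0 := fun h => by simp [h] at hf
    obtain ⟨i, _⟩ := hcov (LinearMap.ker f) (coatom_ker f hfne)
    exact i.elim0
  · -- the kernels of evaluations at the `y i` can't cover the dual space
    have hKne : ∀ i, LinearMap.ker (evalAt D Y (y i)) ≠ ⊤ := by
      intro i h
      obtain ⟨f, hf⟩ := exists_dual_one (D := D) (hyne i)
      have : f ∈ LinearMap.ker (evalAt D Y (y i)) := h ▸ Submodule.mem_top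
      rw [LinearMap.mem_ker] at this
      simp only [evalAt, LinearMap.coe_mk, AddHom.coe_mk] at this
      rw [hf] at this
      exact one_ne_zero this
    have hcardop : (n : Cardinal) ≤ Cardinal.mk Dᵐᵒᵖ := by
      rwa [← Cardinal.mk_congr (MulOpposite.opEquiv (α := D))]
    have := cover_aux n (fun i => LinearMap.ker (evalAt D Y (y i))) hKne hcardop
    rw [not_forall] at this
    obtain ⟨f, hf⟩ := this
    push_neg at hf
    have hfval : ∀ i, f (y i) ≠ 0 := by
      intro i h
      exact hf i (LinearMap.mem_ker.mpr h)
    have hfne : f ≠ 0 := fun h => hfval ⟨0, hn1⟩ (by simp [h])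
    obtain ⟨i, hi⟩ := hcov (LinearMap.ker f) (coatom_ker f hfne)
    exact hfval i (LinearMap.mem_ker.mp (hi (hymem i)))
end

section
/- Let V be a simple Artinian ring, Y a left V-module, f' a minimal idempotent of V, and N = card(f'Vf'). Then Y cannot be written as a union of at most N proper submodules. -/
private lemma twoSided_mem_all {V : Type*} [Ring V] [IsSimpleRing V]
    (I : TwoSidedIdeal V) (x : V) (hx : x ∈ I) (hx0 : x ≠ 0) : ∀ y : V, y ∈ I := by
  have hs := IsSimpleRing.simple (R := V)
  rcases hs.eq_bot_or_eq_top I with h | h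
  · rw [h, TwoSidedIdeal.mem_bot] at hx
    exact absurd hx hx0
  · intro y
    rw [h]
    trivial

private lemma exists_smul_notMem' {V Y : Type*} [Ring V] [IsSimpleRing V]
    [AddCommGroup Y] [Module V Y] (M : Submodule V Y) (hM : M ≠ ⊤)
    (f : V) (hf0 : f ≠ 0) : ∃ s : Y, f • s ∉ M := by
  by_contra h
  push_neg at h
  let I : TwoSidedIdeal V := TwoSidedIdeal.mk' {v : V | ∀ y : Y, v • y ∈ M}
    (fun y => by simpa using M.zero_mem)
    (fun hx hy y => by rw [add_smul]; exact M.add_mem (hx y) (hy y))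
    (fun hx y => by rw [neg_smul]; exact M.neg_mem (hx y))
    (fun {x y} hy z => by rw [mul_smul]; exact M.smul_mem x (hy z))
    (fun {x y} hx z => by rw [mul_smul]; exact hx (y • z))
  have hfI : f ∈ I := by
    rw [TwoSidedIdeal.mem_mk']
    exact h
  have h1 : (1 : V) ∈ I := twoSided_mem_all I f hfI hf0 1
  rw [TwoSidedIdeal.mem_mk'] at h1
  apply hM
  ext y
  simp only [Submodule.mem_top, iff_true]
  simpa using h1 y

private lemma exists_left_inv' {V : Type*} [Ring V] [IsSimpleRing V] [IsArtinianRing V]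
    (f : V) (hf : IsIdempotentElem f)
    (hmin : ∀ e : V, IsIdempotentElem e → e ≠ 0 → e * f = e → f * e = e → e = f)
    (d : V) (hfd : f * d = d) (hdf : d * f = d) (hd0 : d ≠ 0) :
    ∃ c : V, c * d = f := by
  obtain ⟨J, ⟨hJ0, hJle⟩, hJmin⟩ :=
    (wellFounded_lt (α := Submodule V V)).has_min
      {J : Submodule V V | J ≠ ⊥ ∧ J ≤ Submodule.span V {d}}
      ⟨Submodule.span V {d}, by simpa [Submodule.span_singleton_eq_bot] using hd0, le_rfl⟩
  -- J² ≠ 0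
  have hJJ : ∃ x ∈ J, ∃ a ∈ J, x * a ≠ 0 := by
    by_contra h
    push_neg at h
    obtain ⟨a, haJ, ha0⟩ : ∃ a ∈ J, a ≠ 0 := by
      by_contra h'
      push_neg at h'
      apply hJ0
      ext x
      simp only [Submodule.mem_bot]
      exact ⟨fun hx => h' x hx, fun hx => hx ▸ J.zero_mem⟩
    have key : ∀ v : V, a * v * a = 0 := fun v => by
      have := h a haJ (v * a) (J.smul_mem v haJ)
      rwa [← mul_assoc] at this
    let I : TwoSidedIdeal V := TwoSidedIdeal.mk' {w : V | ∀ v : V, a * v * w = 0}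
      (fun v => by simp)
      (fun hx hy v => by rw [mul_add, hx v, hy v, add_zero])
      (fun hx v => by rw [mul_neg, hx v, neg_zero])
      (fun {x y} hy v => by rw [show a * v * (x * y) = a * (v * x) * y by simp only [mul_assoc], hy (v * x)])
      (fun {x y} hx v => by rw [show a * v * (x * y) = (a * v * x) * y by simp only [mul_assoc], hx v, zero_mul])
    have haI : a ∈ I := by rw [TwoSidedIdeal.mem_mk']; exact key
    have h1 : (1 : V) ∈ I := twoSided_mem_all I a haI ha0 1
    rw [TwoSidedIdeal.mem_mk'] at h1
    have := h1 1
    rw [mul_one, mul_one] at this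
    exact ha0 this
  obtain ⟨x, hxJ, a, haJ, hxa0⟩ := hJJ
  have ha0 : a ≠ 0 := fun h => hxa0 (by rw [h, mul_zero])
  set ra : V →ₗ[V] V := LinearMap.toSpanSingleton V V a with hra
  have hra_apply : ∀ v : V, ra v = v * a := fun v => rfl
  have hraJ : J.map ra ≤ J := by
    rintro _ ⟨w, hw, rfl⟩
    exact J.smul_mem w haJ
  have hJa0 : J.map ra ≠ ⊥ := by
    intro hbot
    apply hxa0
    have hmem : ra x ∈ J.map ra := Submodule.mem_map_of_mem hxJ
    rw [hbot, Submodule.mem_bot] at hmem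
    rwa [hra_apply] at hmem
  have hJaJ : J.map ra = J := by
    by_contra hne
    exact hJmin _ ⟨hJa0, hraJ.trans hJle⟩ (lt_of_le_of_ne hraJ hne)
  obtain ⟨e, heJ, hea⟩ : ∃ e ∈ J, e * a = a := by
    have : a ∈ J.map ra := by rw [hJaJ]; exact haJ
    obtain ⟨e, he, heq⟩ := this
    exact ⟨e, he, by rwa [hra_apply] at heq⟩
  -- the "kernel" piece is trivial
  have hL : ∀ w ∈ J, w * a = 0 → w = 0 := by
    intro w hw hwa
    by_contra hw0
    set L := J ⊓ LinearMap.ker ra with hLdef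
    have hwL : w ∈ L := Submodule.mem_inf.mpr ⟨hw, LinearMap.mem_ker.mpr (by rw [hra_apply, hwa])⟩
    have hLne : L ≠ ⊥ := fun hb => hw0 (by rw [hb, Submodule.mem_bot] at hwL; exact hwL)
    have heL : e ∉ L := by
      intro hkL
      have hk := (Submodule.mem_inf.mp hkL).2
      rw [LinearMap.mem_ker, hra_apply, hea] at hk
      exact ha0 hk
    exact hJmin L ⟨hLne, inf_le_left.trans hJle⟩
      (lt_of_le_of_ne inf_le_left (fun hEq => heL (hEq ▸ heJ)))
  have hee : IsIdempotentElem e := by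
    have h1 : e * e - e ∈ J := J.sub_mem (J.smul_mem e heJ) heJ
    have h2 : (e * e - e) * a = 0 := by rw [sub_mul, mul_assoc, hea, hea, sub_self]
    have := hL _ h1 h2
    exact sub_eq_zero.mp this
  have he0 : e ≠ 0 := fun h => ha0 (by rw [h, zero_mul] at hea; exact hea.symm)
  have heSpan : e ∈ Submodule.span V {d} := hJle heJ
  obtain ⟨r, hr⟩ := Submodule.mem_span_singleton.mp heSpan
  have hef : e * f = e := by
    rw [← hr, smul_eq_mul, mul_assoc, hdf]
  set e' := f * e with he'
  have he'0 : e' ≠ 0 := by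
    intro h
    apply he0
    calc e = e * e := hee.eq.symm
    _ = (e * f) * e := by rw [hef]
    _ = e * (f * e) := by rw [mul_assoc]
    _ = 0 := by rw [← he', h, mul_zero]
  have he'idem : IsIdempotentElem e' := by
    show (f * e) * (f * e) = f * e
    calc (f * e) * (f * e) = f * ((e * f) * e) := by simp only [mul_assoc]
    _ = f * (e * e) := by rw [hef]
    _ = f * e := by rw [hee.eq]
  have he'f : e' * f = e' := by rw [he', mul_assoc, hef]
  have hfe' : f * e' = e' := by rw [he', ← mul_assoc, hf.eq]
  have hEf : e' = f := hmin e' he'idem he'0 he'f hfe'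
  have hfSpan : f ∈ Submodule.span V {d} := by
    rw [← hEf, he']
    exact Submodule.smul_mem _ f heSpan
  obtain ⟨c, hc⟩ := Submodule.mem_span_singleton.mp hfSpan
  exact ⟨c, by rwa [smul_eq_mul] at hc⟩

/-- **Lemma 3.5** (as stated for simple Artinian rings). If `V` is a simple Artinian
ring, `f'` a minimal idempotent of `V`, and `N = card (f' V f')`, then a left `V`-module
`Y` is not the union of at most `N` proper submodules. -/
theorem stmt6 (V Y : Type*) [Ring V] [IsSimpleRing V] [IsArtinianRing V]
    [AddCommGroup Y] [Module V Y]
    (f : V) (hf : IsIdempotentElem f) (hf0 : f ≠ 0)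
    (hmin : ∀ e : V, IsIdempotentElem e → e ≠ 0 → e * f = e → f * e = e → e = f)
    (n : ℕ) (Ys : Fin n → Submodule V Y) (hYs : ∀ i, Ys i ≠ ⊤)
    (hcard : (n : Cardinal) ≤ Cardinal.mk {x : V // ∃ v : V, x = f * v * f}) :
    (Set.univ : Set Y) ≠ ⋃ i, (Ys i : Set Y) := by
  have H : ∀ m : ℕ, (m : Cardinal) ≤ Cardinal.mk {x : V // ∃ v : V, x = f * v * f} →
      ∀ Zs : Fin m → Submodule V Y, (∀ i, Zs i ≠ ⊤) →
      (Set.univ : Set Y) ≠ ⋃ i, (Zs i : Set Y) := by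
    intro m
    induction m using Nat.strong_induction_on with
    | _ m IH =>
      intro hm Zs hZs hunion
      match m, hm, Zs, hZs, hunion, IH with
      | 0, hm, Zs, hZs, hunion, IH =>
        have h0 : (0 : Y) ∈ ⋃ i, (Zs i : Set Y) := hunion ▸ Set.mem_univ 0
        simp at h0
      | m + 1, hm, Zs, hZs, hunion, IH =>
        by_cases hA : ∃ l, (Zs l : Set Y) ⊆ ⋃ i, ⋃ (_ : i ≠ l), (Zs i : Set Y)
        · obtain ⟨l, hl⟩ := hA
          refine IH m (Nat.lt_succ_self m) ?_ (fun k => Zs (l.succAbove k)) (fun k => hZs _) ?_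
          · exact le_trans (by exact_mod_cast Nat.le_succ m) hm
          · apply Set.Subset.antisymm
            · intro w _
              have hw : w ∈ ⋃ i, (Zs i : Set Y) := hunion ▸ Set.mem_univ w
              obtain ⟨i, hi⟩ := Set.mem_iUnion.mp hw
              rcases eq_or_ne i l with rfl | hne
              · have hw2 := hl hi
                simp only [Set.mem_iUnion] at hw2
                obtain ⟨i', hne', hi'⟩ := hw2
                obtain ⟨k, rfl⟩ := Fin.exists_succAbove_eq hne'
                exact Set.mem_iUnion.mpr ⟨k, hi'⟩
              · obtain ⟨k, rfl⟩ := Fin.exists_succAbove_eq hne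
                exact Set.mem_iUnion.mpr ⟨k, hi⟩
            · exact fun w _ => Set.mem_univ w
        · push_neg at hA
          obtain ⟨y, hyl, hy'⟩ := Set.not_subset.mp (hA 0)
          have hy : ∀ i, i ≠ (0 : Fin (m + 1)) → y ∉ Zs i := by
            intro i hi hmem
            exact hy' (Set.mem_iUnion.mpr ⟨i, Set.mem_iUnion.mpr ⟨hi, hmem⟩⟩)
          obtain ⟨s, hs⟩ := exists_smul_notMem' (Zs 0) (hZs 0) f hf0
          set z := f • s with hzdef
          have hfz : f • z = z := by rw [hzdef, ← mul_smul, hf.eq]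
          -- an injection from `Fin (m+2)`-worth of indices
          have hm' : Cardinal.lift.{u_1} (Cardinal.mk (Fin (m + 1))) ≤
              Cardinal.lift.{0} (Cardinal.mk {x : V // ∃ v : V, x = f * v * f}) := by
            rw [Cardinal.mk_fin, Cardinal.lift_natCast, Cardinal.lift_uzero]
            exact_mod_cast hm
          obtain ⟨emb⟩ := Cardinal.lift_mk_le'.mp hm'
          have hpoint : ∀ p : Option (Fin (m + 1)),
              ∃ i : Fin (m + 1), (p.elim z (fun k => y + (emb k).1 • z)) ∈ Zs i := by
            intro p
            have hp : (p.elim z (fun k => y + (emb k).1 • z)) ∈ ⋃ i, (Zs i : Set Y) :=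
              hunion ▸ Set.mem_univ _
            simpa [Set.mem_iUnion] using hp
          choose ψ hψ using hpoint
          have hψn : z ∈ Zs (ψ none) := hψ none
          have hψs : ∀ k, y + (emb k).1 • z ∈ Zs (ψ (some k)) := fun k => hψ (some k)
          obtain ⟨p, q, hne, hfe⟩ :=
            Fintype.exists_ne_map_eq_of_card_lt ψ (by simp)
          have step : ∀ i : Fin (m + 1), z ∈ Zs i → y ∈ Zs i → False := by
            intro i hzi hyi
            have hi0 : i = 0 := by
              by_contra h0
              exact hy i h0 hyi
            rw [hi0] at hzi
            exact hs hzi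
          have hmix : ∀ (a : V) (i : Fin (m + 1)), z ∈ Zs i → y + a • z ∈ Zs i → False := by
            intro a i hzi hyi
            have h2 : a • z ∈ Zs i := Submodule.smul_mem _ _ hzi
            have h3 : y ∈ Zs i := by
              have := Submodule.sub_mem _ hyi h2
              rwa [add_sub_cancel_right] at this
            exact step i hzi h3
          match p, q, hne, hfe with
          | none, none, hne, hfe => exact hne rfl
          | none, some k, hne, hfe =>
            have h1 := hψs k
            rw [← hfe] at h1
            exact hmix (emb k).1 (ψ none) hψn h1
          | some k, none, hne, hfe =>
            have h1 := hψs k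
            rw [hfe] at h1
            exact hmix (emb k).1 (ψ none) hψn h1
          | some k, some k', hne, hfe =>
            have hkk' : k ≠ k' := fun h => hne (by rw [h])
            have hab : (emb k).1 ≠ (emb k').1 := fun h =>
              hkk' (emb.injective (Subtype.ext h))
            set i := ψ (some k) with hidef
            have h1 := hψs k
            have h2 := hψs k'
            rw [← hfe] at h2
            have h3 : ((emb k).1 - (emb k').1) • z ∈ Zs i := by
              have hd := Submodule.sub_mem _ h1 h2
              have heq : (y + (emb k).1 • z) - (y + (emb k').1 • z)
                  = ((emb k).1 - (emb k').1) • z := by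
                rw [sub_smul]
                abel
              rwa [heq] at hd
            obtain ⟨va, hva⟩ := (emb k).2
            obtain ⟨vb, hvb⟩ := (emb k').2
            have hfd : f * ((emb k).1 - (emb k').1) = (emb k).1 - (emb k').1 := by
              rw [hva, hvb, mul_sub]
              rw [show f * (f * va * f) = (f * f) * va * f by simp only [mul_assoc],
                show f * (f * vb * f) = (f * f) * vb * f by simp only [mul_assoc], hf.eq]
            have hdf : ((emb k).1 - (emb k').1) * f = (emb k).1 - (emb k').1 := by
              rw [hva, hvb, sub_mul]
              rw [show f * va * f * f = f * va * (f * f) by simp only [mul_assoc],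
                show f * vb * f * f = f * vb * (f * f) by simp only [mul_assoc], hf.eq]
            have hd0 : (emb k).1 - (emb k').1 ≠ 0 := sub_ne_zero.mpr hab
            obtain ⟨c, hc⟩ := exists_left_inv' f hf hmin ((emb k).1 - (emb k').1) hfd hdf hd0
            have hzi : z ∈ Zs i := by
              have h4 := Submodule.smul_mem (Zs i) c h3
              rwa [← mul_smul, hc, hfz] at h4
            exact hmix (emb k).1 i hzi h1
  exact H n hcard Ys hYs
end

section
/- Let k be a field with more than 2 elements, and let m = n = q ≥ 1. Let A_q be the space of q×q matrices over k whose diagonal entries are all equal to each other (all off-diagonal entries arbitrary). Then A_q satisfies: for every nonzero column vector b ∈ k^q there is a nonzero row vector c ∈ k^q with the rank-one matrix b·c ∈ A_q, and for every nonzero row vector c there is a nonzero column vector b with b·c ∈ A_q. -/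
lemma stmt7_aux {k : Type*} [Field k] {q : ℕ} (b : Fin q → k) (hb : b ≠ 0) :
    ∃ c : Fin q → k, c ≠ 0 ∧ ∀ i j : Fin q, b i * c i = b j * c j := by
  by_cases h : ∀ i, b i ≠ 0
  · obtain ⟨i₀, hi₀⟩ := Function.ne_iff.mp hb
    refine ⟨fun i => (b i)⁻¹, ?_, fun i j => by
      simp [mul_inv_cancel₀ (h i), mul_inv_cancel₀ (h j)]⟩
    intro hc
    have := congrFun hc i₀
    simp only [Pi.zero_apply, inv_eq_zero] at this
    exact h i₀ this
  · push_neg at h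
    obtain ⟨i₀, hi₀⟩ := h
    refine ⟨Pi.single i₀ 1, ?_, fun i j => ?_⟩
    · intro hc
      have := congrFun hc i₀
      simp at this
    · have key : ∀ i : Fin q, b i * (Pi.single i₀ 1 : Fin q → k) i = 0 := by
        intro i
        by_cases hii : i = i₀
        · subst hii; simp [hi₀]
        · simp [Pi.single_apply, hii]
      rw [key i, key j]

/-- For a field `k` with more than two elements and `q ≥ 1`, the space `A_q` of `q × q`
matrices whose diagonal entries all coincide contains, for every nonzero column vector
`b`, a nonzero rank-one matrix `b·c`, and dually for every nonzero row vector `c`. -/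
theorem stmt7 (k : Type*) [Field k] (hk : (2 : Cardinal) < Cardinal.mk k)
    (q : ℕ) (hq : 0 < q) :
    (∀ b : Fin q → k, b ≠ 0 → ∃ c : Fin q → k, c ≠ 0 ∧
        ∀ i j : Fin q, Matrix.vecMulVec b c i i = Matrix.vecMulVec b c j j) ∧
    (∀ c : Fin q → k, c ≠ 0 → ∃ b : Fin q → k, b ≠ 0 ∧
        ∀ i j : Fin q, Matrix.vecMulVec b c i i = Matrix.vecMulVec b c j j) := by
  constructor
  · intro b hb
    obtain ⟨c, hc, h⟩ := stmt7_aux b hb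
    exact ⟨c, hc, fun i j => by simpa [Matrix.vecMulVec_apply] using h i j⟩
  · intro c hc
    obtain ⟨b, hb, h⟩ := stmt7_aux c hc
    exact ⟨b, hb, fun i j => by
      simpa [Matrix.vecMulVec_apply, mul_comm] using h i j⟩
end

section
/- Let k be a field, m, n, q positive integers with q ≤ min(m,n), and let A_q be the space of m×n matrices over k supported on the union of the first q rows and first q columns and whose first q diagonal entries are all equal. Then for every nonzero b ∈ k^m there exists a nonzero c ∈ k^n such that the rank-one matrix b·cᵀ lies in A_q, and symmetrically for every nonzero c ∈ k^n there exists a nonzero b ∈ k^m with b·cᵀ ∈ A_q. -/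
/-- The space `A_q` of `m × n` matrices supported on the union of the first `q` rows and
first `q` columns, with equal first `q` diagonal entries, satisfies conditions (2.2) and
(2.3) of the paper: every nonzero `b ∈ k^m` admits a nonzero `c ∈ k^n` with the outer
product `b·cᵀ ∈ A_q`, and symmetrically. -/
theorem stmt8 (k : Type*) [Field k] (m n q : ℕ) (hq : 0 < q) (hqm : q ≤ m) (hqn : q ≤ n) :
    let Aq : Set (Matrix (Fin m) (Fin n) k) :=
      {M | (∀ (i : Fin m) (j : Fin n), q ≤ (i : ℕ) → q ≤ (j : ℕ) → M i j = 0) ∧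
        (∀ (i : Fin m) (j : Fin n) (i' : Fin m) (j' : Fin n),
          (i : ℕ) = (j : ℕ) → (i' : ℕ) = (j' : ℕ) → (i : ℕ) < q → (i' : ℕ) < q →
            M i j = M i' j')}
    (∀ b : Fin m → k, b ≠ 0 → ∃ c : Fin n → k, c ≠ 0 ∧ Matrix.vecMulVec b c ∈ Aq) ∧
    (∀ c : Fin n → k, c ≠ 0 → ∃ b : Fin m → k, b ≠ 0 ∧ Matrix.vecMulVec b c ∈ Aq) := by
  intro Aq
  constructor
  · intro b hb
    by_cases hzero : ∃ i0 : ℕ, ∃ h0 : i0 < q, b ⟨i0, lt_of_lt_of_le h0 hqm⟩ = 0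
    · obtain ⟨i0, h0, hb0⟩ := hzero
      refine ⟨fun j => if (j : ℕ) = i0 then 1 else 0, ?_, ?_, ?_⟩
      · intro hc
        have := congrFun hc ⟨i0, lt_of_lt_of_le h0 hqn⟩
        simp at this
      · intro i j _ hj
        simp only [Matrix.vecMulVec_apply]
        rw [if_neg (by omega), mul_zero]
      · intro i j i' j' hij hij' hi hi'
        simp only [Matrix.vecMulVec_apply]
        have key : ∀ (a : Fin m) (d : Fin n), (a : ℕ) = (d : ℕ) →
            b a * (if (d : ℕ) = i0 then (1 : k) else 0) = 0 := by
          intro a d had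
          by_cases hd : (d : ℕ) = i0
          · rw [if_pos hd]
            have : a = ⟨i0, lt_of_lt_of_le h0 hqm⟩ := Fin.ext (by simp only [Fin.val_mk]; omega)
            rw [this, hb0, zero_mul]
          · rw [if_neg hd, mul_zero]
        rw [key i j hij, key i' j' hij']
    · push_neg at hzero
      refine ⟨fun j => if h : (j : ℕ) < q then (b ⟨j, lt_of_lt_of_le h hqm⟩)⁻¹ else 0,
        ?_, ?_, ?_⟩
      · intro hc
        have := congrFun hc ⟨0, lt_of_lt_of_le hq hqn⟩
        simp only [dif_pos hq, Pi.zero_apply, inv_eq_zero] at this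
        exact hzero 0 hq this
      · intro i j _ hj
        simp only [Matrix.vecMulVec_apply]
        rw [dif_neg (by omega), mul_zero]
      · intro i j i' j' hij hij' hi hi'
        simp only [Matrix.vecMulVec_apply]
        have key : ∀ (a : Fin m) (d : Fin n), (a : ℕ) = (d : ℕ) → (a : ℕ) < q →
            b a * (if h : (d : ℕ) < q then (b ⟨d, lt_of_lt_of_le h hqm⟩)⁻¹ else 0) = 1 := by
          intro a d had ha
          rw [dif_pos (had ▸ ha)]
          have : (⟨(d : ℕ), lt_of_lt_of_le (had ▸ ha) hqm⟩ : Fin m) = a := Fin.ext (by simp only [Fin.val_mk]; omega)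
          rw [this, mul_inv_cancel₀ (hzero a ha)]
        rw [key i j hij hi, key i' j' hij' hi']
  · intro c hc
    by_cases hzero : ∃ j0 : ℕ, ∃ h0 : j0 < q, c ⟨j0, lt_of_lt_of_le h0 hqn⟩ = 0
    · obtain ⟨j0, h0, hc0⟩ := hzero
      refine ⟨fun i => if (i : ℕ) = j0 then 1 else 0, ?_, ?_, ?_⟩
      · intro hb
        have := congrFun hb ⟨j0, lt_of_lt_of_le h0 hqm⟩
        simp at this
      · intro i j hi _
        simp only [Matrix.vecMulVec_apply]
        rw [if_neg (by omega), zero_mul]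
      · intro i j i' j' hij hij' hi hi'
        simp only [Matrix.vecMulVec_apply]
        have key : ∀ (a : Fin m) (d : Fin n), (a : ℕ) = (d : ℕ) →
            (if (a : ℕ) = j0 then (1 : k) else 0) * c d = 0 := by
          intro a d had
          by_cases ha : (a : ℕ) = j0
          · rw [if_pos ha]
            have : d = ⟨j0, lt_of_lt_of_le h0 hqn⟩ := Fin.ext (by simp only [Fin.val_mk]; omega)
            rw [this, hc0, mul_zero]
          · rw [if_neg ha, zero_mul]
        rw [key i j hij, key i' j' hij']
    · push_neg at hzero
      refine ⟨fun i => if h : (i : ℕ) < q then (c ⟨i, lt_of_lt_of_le h hqn⟩)⁻¹ else 0,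
        ?_, ?_, ?_⟩
      · intro hb
        have := congrFun hb ⟨0, lt_of_lt_of_le hq hqm⟩
        simp only [dif_pos hq, Pi.zero_apply, inv_eq_zero] at this
        exact hzero 0 hq this
      · intro i j hi _
        simp only [Matrix.vecMulVec_apply]
        rw [dif_neg (by omega), zero_mul]
      · intro i j i' j' hij hij' hi hi'
        simp only [Matrix.vecMulVec_apply]
        have key : ∀ (a : Fin m) (d : Fin n), (a : ℕ) = (d : ℕ) → (a : ℕ) < q →
            (if h : (a : ℕ) < q then (c ⟨a, lt_of_lt_of_le h hqn⟩)⁻¹ else 0) * c d = 1 := by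
          intro a d had ha
          rw [dif_pos ha]
          have : (⟨(a : ℕ), lt_of_lt_of_le ha hqn⟩ : Fin n) = d := Fin.ext (by simp only [Fin.val_mk]; omega)
          rw [this, inv_mul_cancel₀ (this ▸ hzero a ha)]
        rw [key i j hij hi, key i' j' hij' hi']
end

section
/- Over the field k = F₂ of two elements, let S = k×k×k, T = k, B = k³ (an S-module componentwise), C = k², and A = k³ with the bilinear map h : A × B → C given by h((α₁,α₂,α₃),(β₁,β₂,β₃)) = α₁β₁(1,0) + α₂β₂(0,1) + α₃β₃(1,1). Then: (a) every nonzero a ∈ A induces a nonzero map h(a,−) : B → C; (b) for every maximal S-submodule B₀ ⊂ B there is a nonzero a ∈ A annihilating B₀; (c) for every one-dimensional subspace C₀ ⊆ C there is a nonzero a ∈ A with h(a,B) ⊆ C₀; yet (d) the length of B as S-module plus the dimension of C over k equals 5, while the length of A as (T,S)-bimodule plus 1 equals 4, so the inequality ℓ(B) + ℓ(C) ≤ ℓ(A) + 1 fails. -/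
open Order Module

lemma zmod2_one (x : ZMod 2) (h : x ≠ 0) : x = 1 := by revert x; decide

lemma krullDim_le_nat {α : Type*} [Preorder α] {f : α → ℕ} (hf : StrictMono f)
    (N : ℕ) (hN : ∀ a, f a ≤ N) : krullDim α ≤ N := by
  cases isEmpty_or_nonempty α with
  | inl h => simp [krullDim_eq_bot]
  | inr h =>
    rw [krullDim_eq_iSup_length]
    have : (⨆ (p : LTSeries α), (p.length : ℕ∞)) ≤ (N : ℕ∞) := by
      refine iSup_le fun p => ?_
      have h1 := (p.map f hf).head_add_length_le_nat
      have h2 : p.length ≤ N := le_trans (Nat.le_add_left _ _) (le_trans h1 (hN _))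
      exact_mod_cast h2
    exact_mod_cast this

def sub3 (s : Set (Fin 3)) : Submodule (Fin 3 → ZMod 2) (Fin 3 → ZMod 2) where
  carrier := {x | ∀ i ∉ s, x i = 0}
  add_mem' := by intro a b ha hb i hi; simp [ha i hi, hb i hi]
  zero_mem' := by intro i _; rfl
  smul_mem' := by intro c x hx i hi; simp [Pi.smul_apply, smul_eq_mul, hx i hi]

lemma mem_sub3 {s : Set (Fin 3)} {x} : x ∈ sub3 s ↔ ∀ i ∉ s, x i = 0 := Iff.rfl

lemma dimS : krullDim (Submodule (Fin 3 → ZMod 2) (Fin 3 → ZMod 2)) = 3 := by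
  apply le_antisymm
  · apply krullDim_le_nat
      (f := fun p : Submodule (Fin 3 → ZMod 2) (Fin 3 → ZMod 2) =>
        finrank (ZMod 2) (p.restrictScalars (ZMod 2))) (N := 3)
    · intro p q hpq
      apply Submodule.finrank_lt_finrank_of_lt
      refine lt_of_le_of_ne (fun x hx => hpq.le hx) ?_
      intro he
      exact hpq.ne (Submodule.restrictScalars_injective _ _ _ he)
    · intro p
      calc finrank (ZMod 2) (p.restrictScalars (ZMod 2))
          ≤ finrank (ZMod 2) (Fin 3 → ZMod 2) := Submodule.finrank_le _
        _ = 3 := by simp [Module.finrank_fin_fun]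
  · refine le_trans ?_ (Order.LTSeries.length_le_krullDim
      (⟨3, ![⊥, sub3 {0}, sub3 {0,1}, ⊤], ?_⟩ :
        LTSeries (Submodule (Fin 3 → ZMod 2) (Fin 3 → ZMod 2))))
    · norm_num
    · intro i
      fin_cases i
      · show (⊥ : Submodule (Fin 3 → ZMod 2) (Fin 3 → ZMod 2)) < sub3 {0}
        refine SetLike.lt_iff_le_and_exists.mpr ⟨bot_le, ![1,0,0], ?_, ?_⟩
        · intro i hi; fin_cases i <;> simp_all
        · intro hc
          rw [Submodule.mem_bot] at hc
          have := congrFun hc 0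
          simp at this
      · show sub3 {0} < sub3 {0,1}
        refine SetLike.lt_iff_le_and_exists.mpr ⟨?_, ![0,1,0], ?_, ?_⟩
        · intro x hx i hi
          apply hx
          simp at hi ⊢
          exact hi.1
        · intro i hi; fin_cases i <;> simp_all
        · intro hc
          have := hc 1 (by simp)
          simp at this
      · show sub3 {0,1} < ⊤
        refine SetLike.lt_iff_le_and_exists.mpr ⟨le_top, ![0,0,1], trivial, ?_⟩
        intro hc
        have := hc 2 (by simp)
        simp at this

lemma dimC : krullDim (Submodule (ZMod 2) (Fin 2 → ZMod 2)) = 2 := by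
  apply le_antisymm
  · apply krullDim_le_nat
      (f := fun p : Submodule (ZMod 2) (Fin 2 → ZMod 2) => finrank (ZMod 2) p) (N := 2)
    · exact fun p q hpq => Submodule.finrank_lt_finrank_of_lt hpq
    · intro p
      calc finrank (ZMod 2) p ≤ finrank (ZMod 2) (Fin 2 → ZMod 2) := Submodule.finrank_le _
        _ = 2 := by simp [Module.finrank_fin_fun]
  · refine le_trans ?_ (Order.LTSeries.length_le_krullDim
      (⟨2, ![⊥, Submodule.span (ZMod 2) {![1,0]}, ⊤], ?_⟩ :
        LTSeries (Submodule (ZMod 2) (Fin 2 → ZMod 2))))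
    · norm_num
    · intro i
      fin_cases i
      · show (⊥ : Submodule (ZMod 2) (Fin 2 → ZMod 2)) < Submodule.span (ZMod 2) {![1,0]}
        refine SetLike.lt_iff_le_and_exists.mpr ⟨bot_le, ![1,0],
          Submodule.mem_span_singleton_self _, ?_⟩
        intro hc
        rw [Submodule.mem_bot] at hc
        have := congrFun hc 0
        simp at this
      · show Submodule.span (ZMod 2) {![1,0]} < ⊤
        refine SetLike.lt_iff_le_and_exists.mpr ⟨le_top, ![0,1], trivial, ?_⟩
        intro hc
        rw [Submodule.mem_span_singleton] at hc
        obtain ⟨r, hr⟩ := hc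
        have := congrFun hr 1
        simp at this


/-- **§5.1 counterexample over `𝔽₂`.** With `k = 𝔽₂`, `S = k³`, `T = k`, `B = k³`
(an `S`-module componentwise, i.e. `S` as a module over itself), `C = k²`, `A = k³`, and
`h(a,b) = a₁b₁(1,0) + a₂b₂(0,1) + a₃b₃(1,1)`: every nonzero `a` acts nontrivially, every
maximal `S`-submodule of `B` is annihilated by some nonzero `a`, every one-dimensional
subspace of `C` contains the range of some nonzero `a`, and yet
`ℓ(B) + ℓ(C) = 5 > 4 = ℓ(A) + 1` (lengths as Krull dimensions of submodule lattices;
the `(T,S)`-bimodule length of `A` equals its length as `S`-module, since `T = 𝔽₂` acts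
by scalars). -/
theorem stmt10
    (h : (Fin 3 → ZMod 2) → (Fin 3 → ZMod 2) → (Fin 2 → ZMod 2))
    (hdef : ∀ a b, h a b = ![a 0 * b 0 + a 2 * b 2, a 1 * b 1 + a 2 * b 2]) :
    (∀ a : Fin 3 → ZMod 2, a ≠ 0 → ∃ b : Fin 3 → ZMod 2, h a b ≠ 0) ∧
    (∀ B₀ : Submodule (Fin 3 → ZMod 2) (Fin 3 → ZMod 2), IsCoatom B₀ →
      ∃ a : Fin 3 → ZMod 2, a ≠ 0 ∧ ∀ b ∈ B₀, h a b = 0) ∧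
    (∀ C₀ : Submodule (ZMod 2) (Fin 2 → ZMod 2), IsAtom C₀ →
      ∃ a : Fin 3 → ZMod 2, a ≠ 0 ∧ ∀ b : Fin 3 → ZMod 2, h a b ∈ C₀) ∧
    (krullDim (Submodule (Fin 3 → ZMod 2) (Fin 3 → ZMod 2))
        + krullDim (Submodule (ZMod 2) (Fin 2 → ZMod 2)) = 5 ∧
      krullDim (Submodule (Fin 3 → ZMod 2) (Fin 3 → ZMod 2)) + 1 = 4 ∧
      ¬ (krullDim (Submodule (Fin 3 → ZMod 2) (Fin 3 → ZMod 2))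
            + krullDim (Submodule (ZMod 2) (Fin 2 → ZMod 2))
          ≤ krullDim (Submodule (Fin 3 → ZMod 2) (Fin 3 → ZMod 2)) + 1)) := by
  refine ⟨?_, ?_, ?_, ?_⟩
  · -- (a)
    intro a ha
    by_cases h0 : a 0 = 0
    · by_cases h1 : a 1 = 0
      · by_cases h2 : a 2 = 0
        · exact absurd (funext fun i => by fin_cases i <;> assumption) ha
        · refine ⟨![0,0,1], fun hc => ?_⟩
          have := congrFun hc 0
          rw [hdef] at this
          simp [zmod2_one _ h2] at this
      · refine ⟨![0,1,0], fun hc => ?_⟩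
        have := congrFun hc 1
        rw [hdef] at this
        simp [zmod2_one _ h1] at this
    · refine ⟨![1,0,0], fun hc => ?_⟩
      have := congrFun hc 0
      rw [hdef] at this
      simp [zmod2_one _ h0] at this
  · -- (b)
    intro B₀ hB
    have hex : ∃ i : Fin 3, (Pi.single i 1 : Fin 3 → ZMod 2) ∉ B₀ := by
      by_contra hc
      push_neg at hc
      apply hB.1
      rw [eq_top_iff]
      intro x _
      have hx : x = (x • Pi.single 0 1 + x • Pi.single 1 1 + x • Pi.single 2 1 :
          Fin 3 → ZMod 2) := by
        funext j
        fin_cases j <;> simp [Pi.smul_apply, smul_eq_mul]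
      rw [hx]
      exact B₀.add_mem (B₀.add_mem (B₀.smul_mem _ (hc 0)) (B₀.smul_mem _ (hc 1)))
        (B₀.smul_mem _ (hc 2))
    obtain ⟨i, hi⟩ := hex
    have key : ∀ b ∈ B₀, b i = 0 := by
      intro b hb
      by_contra hbi
      apply hi
      have : (Pi.single i 1 : Fin 3 → ZMod 2) = (Pi.single i 1 : Fin 3 → ZMod 2) • b := by
        funext j
        by_cases hj : j = i
        · subst hj; simp [Pi.smul_apply, smul_eq_mul, zmod2_one _ hbi]
        · simp [Pi.smul_apply, smul_eq_mul, Pi.single_apply, hj]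
      rw [this]
      exact B₀.smul_mem _ hb
    refine ⟨Pi.single i 1, ?_, ?_⟩
    · intro hc
      have := congrFun hc i
      simp at this
    · intro b hb
      have hbi := key b hb
      rw [hdef]
      fin_cases i <;>
        · funext j
          fin_cases j <;> simp_all [Pi.single_apply]
  · -- (c)
    intro C₀ hC
    obtain ⟨v, hvC, hv⟩ : ∃ v, v ∈ C₀ ∧ v ∉ (⊥ : Submodule (ZMod 2) (Fin 2 → ZMod 2)) :=
      SetLike.exists_of_lt (bot_lt_iff_ne_bot.mpr hC.1)
    rw [Submodule.mem_bot] at hv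
    by_cases h0 : v 0 = 0
    · by_cases h1 : v 1 = 0
      · exact absurd (funext fun j => by fin_cases j <;> assumption) hv
      · refine ⟨![0,1,0], fun hc => by simpa using congrFun hc 1, fun b => ?_⟩
        have : h ![0,1,0] b = b 1 • v := by
          rw [hdef]
          funext j
          fin_cases j <;> simp [h0, zmod2_one _ h1]
        rw [this]
        exact C₀.smul_mem _ hvC
    · by_cases h1 : v 1 = 0
      · refine ⟨![1,0,0], fun hc => by simpa using congrFun hc 0, fun b => ?_⟩
        have : h ![1,0,0] b = b 0 • v := by
          rw [hdef]
          funext j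
          fin_cases j <;> simp [h1, zmod2_one _ h0]
        rw [this]
        exact C₀.smul_mem _ hvC
      · refine ⟨![0,0,1], fun hc => by simpa using congrFun hc 2, fun b => ?_⟩
        have : h ![0,0,1] b = b 2 • v := by
          rw [hdef]
          funext j
          fin_cases j <;> simp [zmod2_one _ h0, zmod2_one _ h1]
        rw [this]
        exact C₀.smul_mem _ hvC
  · -- (d)
    rw [dimS, dimC]
    refine ⟨by norm_num, by norm_num, by norm_num⟩
end

section
/- Let R be a left Artinian ring and M a left R-module. If L is a simple submodule of M/J(R)M, then M has a submodule N such that the inclusion N ⊆ M induces an isomorphism N/J(R)N ≅ L (with L the image of N in M/J(R)M). -/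
open Submodule LinearMap

/-- In a left Artinian ring, the Jacobson radical is a finite intersection of
maximal left ideals. -/
lemma aux_finset_inf (R : Type*) [Ring R] [IsArtinianRing R] :
    ∃ s : Finset (Ideal R), (∀ m ∈ s, m.IsMaximal) ∧
      s.inf id = Ideal.jacobson ⊥ := by
  classical
  set T : Set (Ideal R) :=
    {I | ∃ s : Finset (Ideal R), (∀ m ∈ s, m.IsMaximal) ∧ s.inf id = I} with hT
  obtain ⟨I, hI, hmin⟩ := IsArtinian.set_has_minimal T ⟨⊤, ∅, by simp, by simp⟩
  obtain ⟨s, hs, rfl⟩ := hI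
  refine ⟨s, hs, le_antisymm ?_ ?_⟩
  · refine le_sInf ?_
    rintro m ⟨-, hm⟩
    by_contra h
    have hlt : s.inf id ⊓ m < s.inf id := inf_lt_left.mpr h
    refine hmin (s.inf id ⊓ m) ⟨insert m s, ?_, ?_⟩ hlt
    · intro m' hm'
      rcases Finset.mem_insert.mp hm' with rfl | hm'
      · exact hm
      · exact hs m' hm'
    · rw [Finset.inf_insert, inf_comm]
      rfl
  · exact Finset.le_inf fun m hm => sInf_le ⟨bot_le, hs m hm⟩

/-- The quotient of a left Artinian ring by its Jacobson radical is a semisimple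
module over itself. -/
lemma aux_ss_J (R : Type*) [Ring R] [IsArtinianRing R] (Jc : Ideal R)
    (hJc : Jc = Ideal.jacobson ⊥) : IsSemisimpleModule R (R ⧸ Jc) := by
  classical
  obtain ⟨s, hs, hinf⟩ := aux_finset_inf R
  haveI : ∀ i : s, IsSimpleModule R (R ⧸ (i : Ideal R)) := fun i =>
    isSimpleModule_iff_isCoatom.mpr (hs i i.2).out
  haveI hpi : IsSemisimpleModule R (∀ i : s, R ⧸ (i : Ideal R)) :=
    isSemisimpleModule_of_isSemisimpleModule_submodule'
      (p := fun i => range (single R _ i))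
      (fun i => .range _) (iSup_range_single _ _)
  set f : R →ₗ[R] (∀ i : s, R ⧸ (i : Ideal R)) := pi (fun i => (i : Ideal R).mkQ) with hf
  have hker : ker f = Jc := by
    rw [hf, ker_pi, hJc, ← hinf]
    simp only [ker_mkQ]
    rw [Finset.inf_eq_iInf]
    exact iInf_subtype'' (s : Set (Ideal R)) id
  haveI hr : IsSemisimpleModule R ↥(range f) := inferInstance
  exact IsSemisimpleModule.congr (M := ↥(range f))
    ((quotEquivOfEq _ _ hker.symm).trans f.quotKerEquivRange)

/-- Transfer of semisimplicity to quotients by larger left ideals. -/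
lemma aux_quot_of_ss (R : Type*) [Ring R] (Jc I : Ideal R) (hle : Jc ≤ I)
    (hss : IsSemisimpleModule R (R ⧸ Jc)) : IsSemisimpleModule R (R ⧸ I) := by
  have e2 : (R ⧸ I) ≃ₗ[R] ((R ⧸ Jc) ⧸ (Submodule.map Jc.mkQ I)) :=
    (Submodule.quotientQuotientEquivQuotient Jc I hle).symm
  haveI := hss
  exact IsSemisimpleModule.congr e2

/-- A module over a left Artinian ring killed by the Jacobson radical is
semisimple. -/
lemma aux_ss (R V : Type*) [Ring R] [IsArtinianRing R] [AddCommGroup V] [Module R V]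
    (Jc : Ideal R) (hJc : Jc = Ideal.jacobson ⊥)
    (h : Jc • (⊤ : Submodule R V) = ⊥) :
    IsSemisimpleModule R V := by
  refine isSemisimpleModule_of_isSemisimpleModule_submodule'
    (p := fun v : V => span R {v}) (fun v => ?_) ?_
  · have hk : Jc ≤ ker (toSpanSingleton R V v) := by
      intro j hj
      have hjv : j • v ∈ Jc • (⊤ : Submodule R V) := smul_mem_smul hj trivial
      rw [h, mem_bot] at hjv
      simpa [mem_ker, toSpanSingleton_apply] using hjv
    haveI := aux_quot_of_ss R Jc _ hk (aux_ss_J R Jc hJc)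
    have e : (R ⧸ ker (toSpanSingleton R V v)) ≃ₗ[R] ↥(span R {v}) :=
      (toSpanSingleton R V v).quotKerEquivRange.trans
        (LinearEquiv.ofEq _ _ (span_singleton_eq_range R V v).symm)
    exact .congr e.symm
  · rw [eq_top_iff]
    exact fun x _ => le_iSup (fun v : V => span R {v}) x (mem_span_singleton_self x)

/-- **Lemma 7.1(i).** If `R` is left Artinian and `L` is a simple submodule of
`M/J(R)M`, then `M` has a submodule `N` whose image in `M/J(R)M` is exactly `L` and
such that the induced map `N/J(R)N → L` is an isomorphism (i.e. `N ⊓ J(R)M = J(R)N`). -/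
theorem stmt11 (R M : Type*) [Ring R] [IsArtinianRing R] [AddCommGroup M] [Module R M]
    (J : Ideal R) (hJ : J = Ideal.jacobson ⊥)
    (L : Submodule R (M ⧸ (J • ⊤ : Submodule R M)))
    (hL : IsSimpleModule R ↥L) :
    ∃ N : Submodule R M,
      N.map (J • ⊤ : Submodule R M).mkQ = L ∧
      N ⊓ (J • ⊤ : Submodule R M) = J • N := by
  -- pick a nonzero element of L
  have hLatom : IsAtom L := isSimpleModule_iff_isAtom.mp hL
  haveI : Nontrivial ↥L := hL.nontrivial
  obtain ⟨⟨xb, hxbL⟩, hxb0⟩ := exists_ne (0 : ↥L)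
  have hxb0' : xb ≠ 0 := fun h => hxb0 (Subtype.ext h)
  have hspan : span R {xb} = L := by
    rcases (hLatom.le_iff.mp (span_le.mpr (Set.singleton_subset_iff.mpr hxbL))) with h | h
    · exact absurd (span_eq_bot.mp h xb rfl) hxb0'
    · exact h
  -- lift to M
  obtain ⟨x, hx⟩ := (J • ⊤ : Submodule R M).mkQ_surjective xb
  set N₀ : Submodule R M := span R {x} with hN₀
  haveI : IsArtinian R ↥N₀ := isArtinian_of_fg_of_artinian _ (fg_span_singleton x)
  have hN₀L : map (J • ⊤ : Submodule R M).mkQ N₀ = L := by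
    rw [hN₀, Submodule.map_span, Set.image_singleton]
    rw [show (J • ⊤ : Submodule R M).mkQ x = xb from hx, hspan]
  -- minimal submodule of N₀ mapping onto L
  set T : Set (Submodule R ↥N₀) := {C | map (J • ⊤ : Submodule R M).mkQ (map N₀.subtype C) = L} with hT
  obtain ⟨C₀, hC₀, hmin⟩ := IsArtinian.set_has_minimal T
    ⟨⊤, by simp only [hT, Set.mem_setOf_eq, Submodule.map_top, range_subtype]; exact hN₀L⟩
  set N : Submodule R M := map N₀.subtype C₀ with hN
  have hNL : map (J • ⊤ : Submodule R M).mkQ N = L := hC₀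
  have hNN₀ : N ≤ N₀ := map_subtype_le _ _
  -- the quotient of N by J•N
  set JN' : Submodule R ↥N := (J • ⊤ : Submodule R ↥N) with hJN'
  set q := JN'.mkQ with hq
  have hmapJN' : map N.subtype JN' = J • N := by
    rw [hJN', Submodule.map_smul'', Submodule.map_top, range_subtype]
  set k : Submodule R ↥N := comap N.subtype (J • ⊤ : Submodule R M) with hk
  have hmapk : map N.subtype k = N ⊓ (J • ⊤ : Submodule R M) := by
    rw [hk, map_comap_subtype, inf_comm]
  have hJN'k : JN' ≤ k := by
    rw [hk, ← map_le_iff_le_comap, hmapJN']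
    exact Submodule.smul_mono le_rfl le_top
  -- the quotient N/JN is semisimple
  haveI hssQ : IsSemisimpleModule R (↥N ⧸ JN') := by
    apply aux_ss (Jc := J) _ _ hJ
    have h1 : (⊤ : Submodule R (↥N ⧸ JN')) = map q ⊤ := by
      rw [Submodule.map_top, hq, range_mkQ]
    rw [h1, ← Submodule.map_smul'', ← hJN']
    rw [← le_bot_iff, map_le_iff_le_comap, comap_bot, hq, ker_mkQ]
  obtain ⟨cbar, hcompl⟩ := exists_isCompl (map q k)
  set C' : Submodule R ↥N := comap q cbar with hC'
  have hkfix : comap q (map q k) = k := by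
    rw [comap_map_eq, hq, ker_mkQ, sup_eq_left.mpr hJN'k]
  have hsup : C' ⊔ k = ⊤ := by
    have h1 : map q (C' ⊔ k) = ⊤ := by
      rw [Submodule.map_sup, hC', map_comap_eq, hq, range_mkQ, top_inf_eq, sup_comm,
        hcompl.sup_eq_top]
    have h2 := congrArg (comap q) h1
    rw [comap_map_eq, hq, ker_mkQ, comap_top] at h2
    rwa [sup_eq_left.mpr (hJN'k.trans (le_sup_right : k ≤ C' ⊔ k))] at h2
  have hinf : C' ⊓ k = JN' := by
    calc C' ⊓ k = comap q (cbar ⊓ map q k) := by rw [comap_inf, hkfix]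
    _ = comap q ⊥ := by rw [inf_comm, hcompl.inf_eq_bot]
    _ = JN' := by rw [comap_bot, hq, ker_mkQ]
  set C : Submodule R M := map N.subtype C' with hC
  have hCN : C ≤ N := map_subtype_le _ _
  have hCK_sup : C ⊔ (N ⊓ (J • ⊤ : Submodule R M)) = N := by
    rw [hC, ← hmapk, ← Submodule.map_sup, hsup, Submodule.map_top, range_subtype]
  have hCK_inf : C ⊓ (N ⊓ (J • ⊤ : Submodule R M)) = J • N := by
    rw [hC, ← hmapk, ← Submodule.map_inf _ (injective_subtype N), hinf, hmapJN']
  have hCL : map (J • ⊤ : Submodule R M).mkQ C = L := by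
    have h1 : map (J • ⊤ : Submodule R M).mkQ (C ⊔ (N ⊓ (J • ⊤ : Submodule R M))) = L := by rw [hCK_sup, hNL]
    rw [Submodule.map_sup] at h1
    have hbot : map (J • ⊤ : Submodule R M).mkQ (N ⊓ (J • ⊤ : Submodule R M)) = ⊥ := by
      rw [← le_bot_iff, map_le_iff_le_comap, comap_bot, ker_mkQ]
      exact inf_le_right
    rwa [hbot, sup_bot_eq] at h1
  -- minimality forces C = N
  set C₁ : Submodule R ↥N₀ := comap N₀.subtype C with hC₁
  have hmapC₁ : map N₀.subtype C₁ = C := by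
    rw [hC₁, map_comap_subtype, inf_eq_right.mpr (hCN.trans hNN₀)]
  have hC₁T : C₁ ∈ T := by
    rw [hT]; simp only [Set.mem_setOf_eq]; rw [hmapC₁]; exact hCL
  have hC₁le : C₁ ≤ C₀ := by
    have h1 : C₁ ≤ comap N₀.subtype N := comap_mono hCN
    rwa [hN, comap_map_eq, ker_subtype, sup_bot_eq] at h1
  have hC₁eq : C₁ = C₀ := (lt_or_eq_of_le hC₁le).resolve_left (hmin C₁ hC₁T)
  have hCeqN : C = N := by rw [← hmapC₁, hC₁eq, ← hN]
  have hfinal := hCK_inf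
  rw [hCeqN, ← inf_assoc, inf_idem] at hfinal
  exact ⟨N, hNL, hfinal⟩
end

section
/- Let R be a ring and M a left R-module with an essential submodule E, and let f : E → ∏_{i∈I} L_i be a subdirect decomposition of E (an embedding with each composite E → L_i surjective). Then there is a subdirect decomposition g : M → ∏_{i∈I} M_i of M such that each M_i contains L_i as an essential submodule and f is the restriction of g to E. -/
/-- **Lemma 7.2(ii).** If `E` is an essential submodule of `M` and `f : E → ∏ᵢ Lᵢ` is a
subdirect decomposition of `E`, then `M` has a subdirect decomposition
`g : M → ∏ᵢ Mᵢ` (with `Mᵢ = M/Nᵢ`) extending `f`, in which each `Lᵢ` embeds in `Mᵢ` as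
an essential submodule. -/
theorem stmt14 (R M : Type*) [Ring R] [AddCommGroup M] [Module R M]
    (ι : Type*) (L : ι → Type*) [∀ i, AddCommGroup (L i)] [∀ i, Module R (L i)]
    (E : Submodule R M)
    (hE : ∀ X : Submodule R M, X ≠ ⊥ → E ⊓ X ≠ ⊥)
    (f : E →ₗ[R] ∀ i, L i)
    (hfinj : Function.Injective f)
    (hfsurj : ∀ i, Function.Surjective fun x : E => f x i) :
    ∃ N : ι → Submodule R M,
      Function.Injective (fun (x : M) (i : ι) => (N i).mkQ x) ∧
      ∀ i, ∃ φ : L i →ₗ[R] M ⧸ N i,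
        Function.Injective φ ∧
        (∀ X : Submodule R (M ⧸ N i), X ≠ ⊥ → LinearMap.range φ ⊓ X ≠ ⊥) ∧
        ∀ x : E, (N i).mkQ (x : M) = φ (f x i) := by
  classical
  -- the coordinate maps
  set fi : ∀ i, E →ₗ[R] L i := fun i => (LinearMap.proj i).comp f with hfi
  have hfisurj : ∀ i, Function.Surjective (fi i) := fun i => hfsurj i
  -- kernels, pushed into M
  set K : ι → Submodule R M := fun i => (LinearMap.ker (fi i)).map E.subtype with hKdef
  have hKE : ∀ i, K i ≤ E := fun i => Submodule.map_subtype_le _ _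
  have hmemK : ∀ i (x : E), (x : M) ∈ K i ↔ fi i x = 0 := by
    intro i x
    constructor
    · rintro ⟨y, hy, hyx⟩
      have : y = x := Subtype.ext hyx
      rw [← this]; exact hy
    · intro hx; exact ⟨x, hx, rfl⟩
  -- Zorn: choose N i maximal with N i ⊓ E = K i
  have hzorn : ∀ i, ∃ N : Submodule R M, N ⊓ E = K i ∧
      ∀ N' : Submodule R M, N' ⊓ E = K i → N ≤ N' → N' = N := by
    intro i
    obtain ⟨N, -, hN, hmax⟩ := zorn_le_nonempty₀
      {N : Submodule R M | N ⊓ E = K i}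
      (fun c hcs hc y hy => by
        refine ⟨sSup c, ?_, fun z hz => le_sSup hz⟩
        have hne : c.Nonempty := ⟨y, hy⟩
        apply le_antisymm
        · rintro x ⟨hx1, hx2⟩
          obtain ⟨z, hzc, hxz⟩ :=
            (Submodule.mem_sSup_of_directed hne (hc.directedOn)).mp hx1
          have := hcs hzc
          rw [← this]
          exact ⟨hxz, hx2⟩
        · have : K i ≤ y ⊓ E := le_of_eq (hcs hy).symm
          exact this.trans (inf_le_inf_right E (le_sSup hy)))
      (K i) (inf_eq_left.mpr (hKE i))
    exact ⟨N, hN, fun N' hN' hle => le_antisymm (hmax hN' hle) hle⟩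
  choose N hN hNmax using hzorn
  have hKN : ∀ i, K i ≤ N i := fun i => (hN i) ▸ inf_le_left
  -- the map E → M ⧸ N i
  set ψ : ∀ i, E →ₗ[R] M ⧸ N i := fun i => ((N i).mkQ).comp E.subtype with hψ
  have hψker : ∀ i (x : E), ψ i x = 0 ↔ fi i x = 0 := by
    intro i x
    rw [← hmemK i x]
    constructor
    · intro h
      have hx : (x : M) ∈ N i := by
        simpa [hψ, Submodule.Quotient.mk_eq_zero] using h
      have : (x : M) ∈ N i ⊓ E := ⟨hx, x.2⟩
      rwa [hN i] at this
    · intro h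
      have : (x : M) ∈ N i := hKN i h
      simpa [hψ, Submodule.Quotient.mk_eq_zero] using this
  -- injectivity of the product map
  refine ⟨N, ?_, ?_⟩
  · intro x y hxy
    by_contra hne
    have hz : x - y ≠ 0 := sub_ne_zero.mpr hne
    have hmem : ∀ i, x - y ∈ N i := by
      intro i
      have : (N i).mkQ x = (N i).mkQ y := congrFun hxy i
      have : (N i).mkQ (x - y) = 0 := by rw [map_sub, this, sub_self]
      rwa [← LinearMap.mem_ker, Submodule.ker_mkQ] at this
    have hX : Submodule.span R {x - y} ≠ ⊥ := by
      simpa [Submodule.span_singleton_eq_bot] using hz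
    obtain ⟨e, ⟨heE, heX⟩, he0⟩ := Submodule.ne_bot_iff _ |>.mp (hE _ hX)
    have heN : ∀ i, e ∈ N i := fun i =>
      Submodule.span_le.mpr (by simpa using hmem i) heX
    have : f ⟨e, heE⟩ = 0 := by
      funext i
      have : e ∈ N i ⊓ E := ⟨heN i, heE⟩
      rw [hN i] at this
      exact (hmemK i ⟨e, heE⟩).mp this
    have : (⟨e, heE⟩ : E) = 0 := hfinj (by simpa using this)
    exact he0 (by simpa using congrArg Subtype.val this)
  · intro i
    -- build φ
    have hle : LinearMap.ker (fi i) ≤ LinearMap.ker (ψ i) := by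
      intro x hx
      exact LinearMap.mem_ker.mpr ((hψker i x).mpr (LinearMap.mem_ker.mp hx))
    set eqv := (fi i).quotKerEquivOfSurjective (hfisurj i) with heqv
    set φ : L i →ₗ[R] M ⧸ N i :=
      ((LinearMap.ker (fi i)).liftQ (ψ i) hle).comp eqv.symm.toLinearMap with hφ
    have heqv_mk : ∀ x : E, eqv (Submodule.Quotient.mk x) = fi i x := by
      intro x
      simp [heqv, LinearMap.quotKerEquivOfSurjective, LinearMap.quotKerEquivRange_apply_mk]
    have hcomm : ∀ x : E, φ (fi i x) = ψ i x := by
      intro x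
      have : eqv.symm (fi i x) = Submodule.Quotient.mk x := by
        rw [LinearEquiv.symm_apply_eq, heqv_mk]
      simp [hφ, this]
    refine ⟨φ, ?_, ?_, fun x => (hcomm x).symm⟩
    · -- injective
      have h1 : Function.Injective ((LinearMap.ker (fi i)).liftQ (ψ i) hle) := by
        rw [← LinearMap.ker_eq_bot]
        apply Submodule.ker_liftQ_eq_bot
        intro x hx
        exact (hψker i x).mp (LinearMap.mem_ker.mp hx)
      exact h1.comp eqv.symm.injective
    · -- essentiality of range φ
      intro X hX
      set P : Submodule R M := X.comap (N i).mkQ with hP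
      have hNP : N i ≤ P := by
        intro x hx
        have : (N i).mkQ x = 0 := (Submodule.Quotient.mk_eq_zero _).mpr hx
        simp [hP, Submodule.mem_comap, this]
      have hPne : P ≠ N i := by
        intro h
        apply hX
        rw [eq_bot_iff]
        intro y hy
        obtain ⟨m, rfl⟩ := (N i).mkQ_surjective y
        have : m ∈ P := Submodule.mem_comap.mpr hy
        rw [h] at this
        simpa [Submodule.mem_bot, Submodule.Quotient.mk_eq_zero] using this
      have hPK : P ⊓ E ≠ K i := fun h => hPne (hNmax i P h hNP)
      have hKle : K i ≤ P ⊓ E := by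
        rw [← hN i]; exact inf_le_inf_right E hNP
      obtain ⟨e, hePE, heK⟩ : ∃ e, e ∈ P ⊓ E ∧ e ∉ K i := by
        by_contra h
        push_neg at h
        exact hPK (le_antisymm h hKle)
      obtain ⟨heP, heE⟩ := hePE
      refine (Submodule.ne_bot_iff _).mpr ⟨(N i).mkQ e, ⟨?_, heP⟩, ?_⟩
      · exact ⟨fi i ⟨e, heE⟩, (hcomm ⟨e, heE⟩).symm ▸ rfl⟩
      · intro h0
        have : e ∈ N i := (Submodule.Quotient.mk_eq_zero _).mp h0
        have : e ∈ N i ⊓ E := ⟨this, heE⟩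
        rw [hN i] at this
        exact heK this
end
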